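/- arXiv:2003.13438 — 8 statements merged into one kernel-verified Lean document; each statement's English description precedes it below -/
import Mathlib

section
/- Let n ∈ ℕ, let H̄ be an n×n real symmetric positive-definite matrix whose smallest eigenvalue is p > 0, let t > 0, and let ΔH̄ : ℝ → (n×n real matrices) be continuous on [0,t]. Suppose η : ℝ → ℝⁿ is differentiable and satisfies η′(τ) = −(H̄ + ΔH̄(τ)) η(τ) for all τ ∈ [0,t], and set q := (sup_{τ∈[0,t]} ‖ΔH̄(τ)‖_op)/p. If q < 1, then ∫₀ᵗ ‖η(τ)‖ dτ ≤ ‖η(0)‖ / (p(1−q)). -/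
/-- The spectral norm (largest singular value) of a real matrix, i.e. the operator
norm of the induced map between Euclidean spaces. -/
noncomputable def opNorm {ι κ : Type*} [Fintype ι] [Fintype κ] [DecidableEq κ]
    (A : Matrix ι κ ℝ) : ℝ :=
  ‖LinearMap.toContinuousLinearMap (Matrix.toEuclideanLin A)‖

open scoped RealInnerProductSpace

lemma rayleigh {n : ℕ} (H : Matrix (Fin n) (Fin n) ℝ) (hH : H.IsHermitian)
    (p : ℝ) (hmin : ∀ i, p ≤ hH.eigenvalues i) (x : EuclideanSpace ℝ (Fin n)) :
    p * ‖x‖ ^ 2 ≤ ⟪(Matrix.toEuclideanLin H) x, x⟫ := by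
  set b := hH.eigenvectorBasis with hb
  have hbi : ∀ i, (Matrix.toEuclideanLin H) (b i) = hH.eigenvalues i • b i := by
    intro i
    have := hH.mulVec_eigenvectorBasis i
    rw [Matrix.toEuclideanLin_apply]
    ext j
    have := congrFun this j
    simpa using this
  have hx : (Matrix.toEuclideanLin H) x = ∑ i, (hH.eigenvalues i * b.repr x i) • b i := by
    conv_lhs => rw [← b.sum_repr x]
    rw [map_sum]
    simp_rw [map_smul, hbi, smul_smul, mul_comm]
  have hinner : ⟪(Matrix.toEuclideanLin H) x, x⟫ = ∑ i, hH.eigenvalues i * (b.repr x i) ^ 2 := by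
    rw [hx, sum_inner]
    congr 1
    ext i
    rw [real_inner_smul_left, ← b.repr_apply_apply]
    ring
  have hnorm : ‖x‖ ^ 2 = ∑ i, (b.repr x i) ^ 2 := by
    rw [← b.repr.norm_map x, EuclideanSpace.norm_eq,
      Real.sq_sqrt (by positivity)]
    simp [sq_abs]
  rw [hinner, hnorm, Finset.mul_sum]
  apply Finset.sum_le_sum
  intro i _
  exact mul_le_mul_of_nonneg_right (hmin i) (sq_nonneg _)

lemma opNorm_inner_bound {n : ℕ} (A : Matrix (Fin n) (Fin n) ℝ)
    (x : EuclideanSpace ℝ (Fin n)) :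
    |⟪(Matrix.toEuclideanLin A) x, x⟫| ≤ opNorm A * ‖x‖ ^ 2 := by
  have h1 : |⟪(Matrix.toEuclideanLin A) x, x⟫| ≤ ‖(Matrix.toEuclideanLin A) x‖ * ‖x‖ :=
    abs_real_inner_le_norm _ _
  have h2 : ‖(Matrix.toEuclideanLin A) x‖ ≤ opNorm A * ‖x‖ := by
    have := (LinearMap.toContinuousLinearMap (Matrix.toEuclideanLin A)).le_opNorm x
    simpa only [opNorm, LinearMap.coe_toContinuousLinearMap'] using this
  calc |⟪(Matrix.toEuclideanLin A) x, x⟫| ≤ ‖(Matrix.toEuclideanLin A) x‖ * ‖x‖ := h1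
    _ ≤ (opNorm A * ‖x‖) * ‖x‖ := mul_le_mul_of_nonneg_right h2 (norm_nonneg _)
    _ = opNorm A * ‖x‖ ^ 2 := by ring

lemma opNorm_continuous {ι κ : Type*} [Fintype ι] [Fintype κ] [DecidableEq κ] :
    Continuous (opNorm (ι := ι) (κ := κ)) := by
  have : Continuous (fun A : Matrix ι κ ℝ =>
      LinearMap.toContinuousLinearMap (Matrix.toEuclideanLin A)) := by
    have hl : IsLinearMap ℝ (fun A : Matrix ι κ ℝ =>
        LinearMap.toContinuousLinearMap (Matrix.toEuclideanLin A)) := by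
      constructor
      · intro a b; ext x; simp
      · intro c a; ext x; simp
    exact LinearMap.continuous_of_finiteDimensional hl.mk'
  exact continuous_norm.comp this

/-- Bound on A = ∫₀ᵗ‖η(τ)‖dτ from the proof of Theorems 1 and 3 of the supplement:
under the hypotheses of Lemma 1, ∫₀ᵗ ‖η(τ)‖ dτ ≤ ‖η(0)‖/(p(1−q)). -/
theorem stmt1 {n : ℕ} (H : Matrix (Fin n) (Fin n) ℝ) (hH : H.IsHermitian)
    (p : ℝ) (hp : 0 < p)
    (hmin : IsLeast (Set.range hH.eigenvalues) p)
    (t : ℝ) (ht : 0 < t)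
    (ΔH : ℝ → Matrix (Fin n) (Fin n) ℝ)
    (hΔcont : ContinuousOn ΔH (Set.Icc 0 t))
    (η : ℝ → EuclideanSpace ℝ (Fin n)) (hηdiff : Differentiable ℝ η)
    (hode : ∀ τ ∈ Set.Icc (0 : ℝ) t,
      deriv η τ = -(Matrix.toEuclideanLin (H + ΔH τ)) (η τ))
    (q : ℝ) (hq : q = (⨆ τ ∈ Set.Icc (0 : ℝ) t, opNorm (ΔH τ)) / p)
    (hq1 : q < 1) :
    ∫ τ in (0 : ℝ)..t, ‖η τ‖ ≤ ‖η 0‖ / (p * (1 - q)) := by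

  -- the supremum S of opNorm (ΔH τ)
  set S : ℝ := ⨆ τ ∈ Set.Icc (0 : ℝ) t, opNorm (ΔH τ) with hS
  set g : ℝ → ℝ := fun τ => ⨆ _ : τ ∈ Set.Icc (0 : ℝ) t, opNorm (ΔH τ) with hg
  have hfcont : ContinuousOn (fun τ => opNorm (ΔH τ)) (Set.Icc 0 t) :=
    opNorm_continuous.comp_continuousOn hΔcont
  obtain ⟨B, hB⟩ := (isCompact_Icc.image_of_continuousOn hfcont).bddAbove
  have hgbdd : BddAbove (Set.range g) := by
    refine ⟨max B 0, ?_⟩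
    rintro y ⟨τ, rfl⟩
    by_cases hτ : τ ∈ Set.Icc (0 : ℝ) t
    · rw [hg]; simp only; rw [ciSup_pos hτ]
      exact le_max_of_le_left (hB ⟨τ, hτ, rfl⟩)
    · rw [hg]; simp only
      haveI : IsEmpty (τ ∈ Set.Icc (0 : ℝ) t) := ⟨hτ⟩
      rw [Real.iSup_of_isEmpty]
      exact le_max_right _ _
  have hSle : ∀ τ ∈ Set.Icc (0 : ℝ) t, opNorm (ΔH τ) ≤ S := by
    intro τ hτ
    have : opNorm (ΔH τ) = g τ := by rw [hg]; simp only; rw [ciSup_pos hτ]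
    rw [this]
    exact le_ciSup hgbdd τ
  have hSnonneg : 0 ≤ S := by
    have h0 : (0 : ℝ) ∈ Set.Icc (0 : ℝ) t := ⟨le_refl 0, ht.le⟩
    exact le_trans (norm_nonneg _) (hSle 0 h0)
  have hqnonneg : 0 ≤ q := by rw [hq]; exact div_nonneg hSnonneg hp.le
  have hSqp : S = q * p := by rw [hq]; field_simp
  set c : ℝ := p * (1 - q) with hc
  have hcpos : 0 < c := mul_pos hp (by linarith)
  -- eigenvalue lower bound
  have hmin' : ∀ i, p ≤ hH.eigenvalues i := fun i => hmin.2 ⟨i, rfl⟩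
  -- decay estimate
  have hdecay : ∀ τ ∈ Set.Icc (0 : ℝ) t, ‖η τ‖ ≤ ‖η 0‖ * Real.exp (-c * τ) := by
    intro τ hτ
    set F : ℝ → ℝ := fun s => ⟪η s, η s⟫ * Real.exp (2 * c * s) with hF
    have hderivF : ∀ s : ℝ, HasDerivAt F
        ((⟪η s, deriv η s⟫ + ⟪deriv η s, η s⟫) * Real.exp (2 * c * s)
          + ⟪η s, η s⟫ * (Real.exp (2 * c * s) * (2 * c))) s := by
      intro s
      have hη' : HasDerivAt η (deriv η s) s := (hηdiff s).hasDerivAt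
      have h1 : HasDerivAt (fun s => ⟪η s, η s⟫)
          (⟪η s, deriv η s⟫ + ⟪deriv η s, η s⟫) s := hη'.inner ℝ hη'
      have h2 : HasDerivAt (fun s => Real.exp (2 * c * s))
          (Real.exp (2 * c * s) * (2 * c)) s := by
        have := ((hasDerivAt_id s).const_mul (2 * c)).exp
        simpa [mul_comm] using this
      exact h1.mul h2
    have hanti : AntitoneOn F (Set.Icc 0 t) := by
      apply antitoneOn_of_deriv_nonpos (convex_Icc 0 t)
      · exact fun s _ => ((hderivF s).differentiableAt).continuousAt.continuousWithinAt
      · intro s hs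
        exact ((hderivF s).differentiableAt).differentiableWithinAt
      · intro s hs
        rw [interior_Icc] at hs
        rw [(hderivF s).deriv]
        have hsI : s ∈ Set.Icc (0 : ℝ) t := ⟨hs.1.le, hs.2.le⟩
        have hode' := hode s hsI
        have hinner : ⟪deriv η s, η s⟫ ≤ -c * ‖η s‖ ^ 2 := by
          rw [hode']
          have hsplit : (Matrix.toEuclideanLin (H + ΔH s)) (η s)
              = (Matrix.toEuclideanLin H) (η s) + (Matrix.toEuclideanLin (ΔH s)) (η s) := by
            rw [map_add]; rfl
          rw [inner_neg_left, hsplit, inner_add_left]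
          have h1 : p * ‖η s‖ ^ 2 ≤ ⟪(Matrix.toEuclideanLin H) (η s), η s⟫ :=
            rayleigh H hH p hmin' (η s)
          have h2 : |⟪(Matrix.toEuclideanLin (ΔH s)) (η s), η s⟫| ≤ S * ‖η s‖ ^ 2 := by
            refine le_trans (opNorm_inner_bound _ _) ?_
            exact mul_le_mul_of_nonneg_right (hSle s hsI) (sq_nonneg _)
          have h2' : -(S * ‖η s‖ ^ 2) ≤ ⟪(Matrix.toEuclideanLin (ΔH s)) (η s), η s⟫ :=
            neg_le_of_abs_le h2
          have : c = p - S := by rw [hc, hSqp]; ring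
          nlinarith [sq_nonneg (‖η s‖)]
        have hsym : ⟪η s, deriv η s⟫ = ⟪deriv η s, η s⟫ := real_inner_comm _ _
        have hGnorm : ⟪η s, η s⟫ = ‖η s‖ ^ 2 := real_inner_self_eq_norm_sq _
        have hexp : 0 < Real.exp (2 * c * s) := Real.exp_pos _
        rw [hsym, hGnorm]
        nlinarith [hexp, hinner, sq_nonneg (‖η s‖)]
    have hF0 : F τ ≤ F 0 := hanti ⟨le_refl 0, ht.le⟩ hτ hτ.1
    have hFτ : ‖η τ‖ ^ 2 * Real.exp (2 * c * τ) ≤ ‖η 0‖ ^ 2 := by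
      have h0 : F 0 = ‖η 0‖ ^ 2 := by
        show ⟪η 0, η 0⟫ * Real.exp (2 * c * 0) = _
        rw [real_inner_self_eq_norm_sq]; simp
      have hτ' : F τ = ‖η τ‖ ^ 2 * Real.exp (2 * c * τ) := by
        show ⟪η τ, η τ⟫ * Real.exp (2 * c * τ) = _
        rw [real_inner_self_eq_norm_sq]
      rw [← hτ', ← h0]; exact hF0
    have hsq : ‖η τ‖ ^ 2 ≤ (‖η 0‖ * Real.exp (-c * τ)) ^ 2 := by
      have hexp : (Real.exp (-c * τ)) ^ 2 = (Real.exp (2 * c * τ))⁻¹ := by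
        rw [sq, ← Real.exp_add, ← Real.exp_neg]
        congr 1
        ring
      rw [mul_pow, hexp]
      calc ‖η τ‖ ^ 2 = ‖η τ‖ ^ 2 * Real.exp (2 * c * τ) * (Real.exp (2 * c * τ))⁻¹ := by
            field_simp
        _ ≤ ‖η 0‖ ^ 2 * (Real.exp (2 * c * τ))⁻¹ :=
            mul_le_mul_of_nonneg_right hFτ (by positivity)
    calc ‖η τ‖ = Real.sqrt (‖η τ‖ ^ 2) := by rw [Real.sqrt_sq (norm_nonneg _)]
      _ ≤ Real.sqrt ((‖η 0‖ * Real.exp (-c * τ)) ^ 2) := Real.sqrt_le_sqrt hsq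
      _ = ‖η 0‖ * Real.exp (-c * τ) := Real.sqrt_sq (by positivity)
  -- integrate
  have hint1 : IntervalIntegrable (fun τ => ‖η τ‖) MeasureTheory.volume 0 t :=
    (hηdiff.continuous.norm).intervalIntegrable 0 t
  have hint2 : IntervalIntegrable (fun τ => ‖η 0‖ * Real.exp (-c * τ))
      MeasureTheory.volume 0 t := by
    apply Continuous.intervalIntegrable
    fun_prop
  have hmono : ∫ τ in (0 : ℝ)..t, ‖η τ‖ ≤ ∫ τ in (0 : ℝ)..t, ‖η 0‖ * Real.exp (-c * τ) :=
    intervalIntegral.integral_mono_on ht.le hint1 hint2 hdecay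
  have hcompute : ∫ τ in (0 : ℝ)..t, ‖η 0‖ * Real.exp (-c * τ)
      = ‖η 0‖ * ((1 - Real.exp (-c * t)) / c) := by
    rw [intervalIntegral.integral_const_mul]
    congr 1
    have hanti : ∀ s ∈ Set.uIcc (0 : ℝ) t, HasDerivAt (fun τ => -Real.exp (-c * τ) / c)
        (Real.exp (-c * s)) s := by
      intro s _
      have h1 : HasDerivAt (fun τ : ℝ => Real.exp (-c * τ)) (Real.exp (-c * s) * (-c)) s := by
        have := ((hasDerivAt_id s).const_mul (-c)).exp
        simpa [mul_comm] using this
      have := (h1.neg).div_const c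
      rw [show -(Real.exp (-c * s) * -c) / c = Real.exp (-c * s) by
        rw [div_eq_iff hcpos.ne']; ring] at this
      exact this
    rw [intervalIntegral.integral_eq_sub_of_hasDerivAt hanti]
    · field_simp
      simp only [mul_zero, neg_zero, Real.exp_zero]; ring
    · apply Continuous.intervalIntegrable
      fun_prop
  have hfinal : ‖η 0‖ * ((1 - Real.exp (-c * t)) / c) ≤ ‖η 0‖ / c := by
    have he : 0 < Real.exp (-c * t) := Real.exp_pos _
    have h1 : (1 - Real.exp (-c * t)) / c ≤ 1 * c⁻¹ := by
      rw [div_eq_mul_inv]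
      exact mul_le_mul_of_nonneg_right (by linarith) (by positivity)
    calc ‖η 0‖ * ((1 - Real.exp (-c * t)) / c) ≤ ‖η 0‖ * (1 * c⁻¹) :=
          mul_le_mul_of_nonneg_left h1 (norm_nonneg _)
      _ = ‖η 0‖ / c := by rw [div_eq_mul_inv]; ring
  calc ∫ τ in (0 : ℝ)..t, ‖η τ‖ ≤ ‖η 0‖ * ((1 - Real.exp (-c * t)) / c) := by
        rw [← hcompute]; exact hmono
    _ ≤ ‖η 0‖ / c := hfinal
    _ = ‖η 0‖ / (p * (1 - q)) := by rw [hc]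
end

section
/- Let n ∈ ℕ, let H̄ be an n×n real symmetric matrix all of whose eigenvalues are ≥ p for some p > 0, let t > 0, let q ≥ 0, and let ΔH̄ : ℝ → (n×n real matrices) be continuous on [0,t] with ‖ΔH̄(τ)‖_op ≤ q·p for all τ ∈ [0,t]. Then for every continuous function Δη : [0,t] → ℝⁿ, ∫₀ᵗ ‖ ∫₀ˢ exp(−(s−τ) H̄) ΔH̄(τ) Δη(τ) dτ ‖ ds ≤ q ∫₀ᵗ ‖Δη(s)‖ ds. -/
open Matrix NormedSpace

section aux
variable {n : ℕ}

attribute [local instance] Matrix.linftyOpNormedAddCommGroup Matrix.linftyOpNormedRing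
  Matrix.linftyOpNormedAlgebra

lemma my_toEuclideanCLM_exp (M : Matrix (Fin n) (Fin n) ℝ) :
    Matrix.toEuclideanCLM (𝕜 := ℝ) (NormedSpace.exp M)
      = NormedSpace.exp (Matrix.toEuclideanCLM (𝕜 := ℝ) M) := by
  have hc : Continuous (fun A : Matrix (Fin n) (Fin n) ℝ => Matrix.toEuclideanCLM (𝕜 := ℝ) A) := by
    let L : Matrix (Fin n) (Fin n) ℝ →ₗ[ℝ]
        (EuclideanSpace ℝ (Fin n) →L[ℝ] EuclideanSpace ℝ (Fin n)) :=
      { toFun := fun A => Matrix.toEuclideanCLM (𝕜 := ℝ) A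
        map_add' := fun A B => by simp
        map_smul' := fun c A => by simp }
    exact L.continuous_of_finiteDimensional
  exact map_exp (Matrix.toEuclideanCLM (𝕜 := ℝ)) hc M

lemma my_exp_apply_eig (M : Matrix (Fin n) (Fin n) ℝ) (v : EuclideanSpace ℝ (Fin n)) (μ : ℝ)
    (hv : Matrix.toEuclideanLin M v = μ • v) :
    Matrix.toEuclideanLin (NormedSpace.exp M) v = Real.exp μ • v := by
  set T := Matrix.toEuclideanCLM (𝕜 := ℝ) M with hT
  have hTv : T v = μ • v := hv
  have hpow : ∀ k : ℕ, (T ^ k) v = (μ ^ k) • v := by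
    intro k; induction k with
    | zero => simp
    | succ k ih =>
        rw [pow_succ, ContinuousLinearMap.mul_apply, hTv]
        rw [_root_.map_smul, ih, smul_smul, pow_succ, mul_comm]
  have h1 : Matrix.toEuclideanLin (NormedSpace.exp M) v
      = (NormedSpace.exp T) v := by
    rw [← Matrix.coe_toEuclideanCLM_eq_toEuclideanLin, my_toEuclideanCLM_exp]
    rfl
  rw [h1, exp_eq_tsum ℝ]
  have hsum := expSeries_summable' (𝕂 := ℝ) T
  have h2 : (∑' k : ℕ, ((k.factorial : ℝ)⁻¹) • T ^ k) v
      = ∑' k : ℕ, (((k.factorial : ℝ)⁻¹) • T ^ k) v :=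
    (ContinuousLinearMap.apply ℝ (EuclideanSpace ℝ (Fin n)) v).map_tsum hsum
  rw [h2]
  have h3 : ∀ k : ℕ, (((k.factorial : ℝ)⁻¹) • T ^ k) v
      = (((k.factorial : ℝ)⁻¹) * μ ^ k) • v := by
    intro k
    rw [ContinuousLinearMap.smul_apply, hpow, smul_smul]
  simp_rw [h3]
  rw [Summable.tsum_smul_const (by simpa using expSeries_summable' (𝕂 := ℝ) (𝔸 := ℝ) μ)]
  congr 1
  rw [Real.exp_eq_exp_ℝ, exp_eq_tsum ℝ]
  simp [smul_eq_mul]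

end aux

section aux2
variable {n : ℕ}

lemma my_norm_exp_le (H : Matrix (Fin n) (Fin n) ℝ) (hH : H.IsHermitian)
    (p : ℝ) (heig : ∀ i, p ≤ hH.eigenvalues i) (a : ℝ) (ha : 0 ≤ a)
    (v : EuclideanSpace ℝ (Fin n)) :
    ‖Matrix.toEuclideanLin (NormedSpace.exp (-(a • H))) v‖ ≤ Real.exp (-(a * p)) * ‖v‖ := by
  have hM : (-(a • H)).IsHermitian := by
    rw [Matrix.IsHermitian, Matrix.conjTranspose_neg, Matrix.conjTranspose_smul, star_trivial,
      hH.eq]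
  have hexp : (NormedSpace.exp (-(a • H))).IsHermitian := hM.exp
  have hsym : (Matrix.toEuclideanLin (NormedSpace.exp (-(a • H)))).IsSymmetric :=
    Matrix.isHermitian_iff_isSymmetric.mp hexp
  set b := hH.eigenvectorBasis with hb
  have heigvec : ∀ j, Matrix.toEuclideanLin (-(a • H)) (b j)
      = (-(a * hH.eigenvalues j)) • b j := by
    intro j
    have h1 : Matrix.toEuclideanLin H (b j) = hH.eigenvalues j • b j := by
      have h0 := hH.mulVec_eigenvectorBasis j
      rw [Matrix.toEuclideanLin_apply]
      exact congrArg (WithLp.equiv 2 (Fin n → ℝ)).symm h0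
    rw [map_neg, _root_.map_smul, LinearMap.neg_apply, LinearMap.smul_apply, h1, smul_smul,
      neg_smul]
  have hEb : ∀ j, Matrix.toEuclideanLin (NormedSpace.exp (-(a • H))) (b j)
      = Real.exp (-(a * hH.eigenvalues j)) • b j :=
    fun j => my_exp_apply_eig _ _ _ (heigvec j)
  have hcoord : ∀ j, b.repr (Matrix.toEuclideanLin (NormedSpace.exp (-(a • H))) v) j
      = Real.exp (-(a * hH.eigenvalues j)) * b.repr v j := by
    intro j
    rw [OrthonormalBasis.repr_apply_apply, OrthonormalBasis.repr_apply_apply,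
      ← hsym (b j) v, hEb j, real_inner_smul_left]
  rw [← b.repr.norm_map (Matrix.toEuclideanLin (NormedSpace.exp (-(a • H))) v),
    ← b.repr.norm_map v]
  rw [EuclideanSpace.norm_eq, EuclideanSpace.norm_eq]
  have key : ∀ j, ‖b.repr (Matrix.toEuclideanLin (NormedSpace.exp (-(a • H))) v) j‖ ^ 2
      ≤ (Real.exp (-(a * p)) * ‖b.repr v j‖) ^ 2 := by
    intro j
    have h2 : Real.exp (-(a * hH.eigenvalues j)) ≤ Real.exp (-(a * p)) :=
      Real.exp_le_exp.mpr (by nlinarith [heig j])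
    have h4 : ‖Real.exp (-(a * hH.eigenvalues j)) * b.repr v j‖
        ≤ Real.exp (-(a * p)) * ‖b.repr v j‖ := by
      rw [norm_mul]
      gcongr
      rw [Real.norm_eq_abs, abs_of_pos (Real.exp_pos _)]
      exact h2
    rw [hcoord j]
    exact pow_le_pow_left₀ (norm_nonneg _) h4 2
  calc Real.sqrt (∑ j, ‖b.repr (Matrix.toEuclideanLin (NormedSpace.exp (-(a • H))) v) j‖ ^ 2)
      ≤ Real.sqrt (∑ j, (Real.exp (-(a * p)) * ‖b.repr v j‖) ^ 2) :=
        Real.sqrt_le_sqrt (Finset.sum_le_sum fun j _ => key j)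
    _ = Real.exp (-(a * p)) * Real.sqrt (∑ j, ‖b.repr v j‖ ^ 2) := by
        simp_rw [mul_pow, ← Finset.mul_sum]
        rw [Real.sqrt_mul (sq_nonneg _), Real.sqrt_sq (Real.exp_pos _).le]

lemma my_toEuclideanLin_mul_apply (A B : Matrix (Fin n) (Fin n) ℝ)
    (v : EuclideanSpace ℝ (Fin n)) :
    Matrix.toEuclideanLin (A * B) v = Matrix.toEuclideanLin A (Matrix.toEuclideanLin B v) := by
  simp [Matrix.toEuclideanLin_apply, Matrix.mulVec_mulVec]

lemma my_norm_toEuclideanLin_le (B : Matrix (Fin n) (Fin n) ℝ) (v : EuclideanSpace ℝ (Fin n)) :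
    ‖Matrix.toEuclideanLin B v‖ ≤ opNorm B * ‖v‖ := by
  have h := (LinearMap.toContinuousLinearMap (Matrix.toEuclideanLin B)).le_opNorm v
  simpa only [opNorm, LinearMap.coe_toContinuousLinearMap'] using h

lemma my_key_bound (H : Matrix (Fin n) (Fin n) ℝ) (hH : H.IsHermitian)
    (p : ℝ) (heig : ∀ i, p ≤ hH.eigenvalues i) (a : ℝ) (ha : 0 ≤ a)
    (D : Matrix (Fin n) (Fin n) ℝ) (v : EuclideanSpace ℝ (Fin n)) :
    ‖Matrix.toEuclideanLin (NormedSpace.exp (-(a • H)) * D) v‖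
      ≤ Real.exp (-(a * p)) * (opNorm D * ‖v‖) := by
  rw [my_toEuclideanLin_mul_apply]
  calc ‖Matrix.toEuclideanLin (NormedSpace.exp (-(a • H))) (Matrix.toEuclideanLin D v)‖
      ≤ Real.exp (-(a * p)) * ‖Matrix.toEuclideanLin D v‖ := my_norm_exp_le H hH p heig a ha _
    _ ≤ Real.exp (-(a * p)) * (opNorm D * ‖v‖) := by
        gcongr
        exact my_norm_toEuclideanLin_le D v

end aux2

/-- Contraction property (in L¹ norm) of the Picard-type map 𝒯 from the proof of
Lemma 1 of the supplement: if H̄ is symmetric with all eigenvalues ≥ p > 0 and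
‖ΔH̄(τ)‖_op ≤ qp on [0,t], then
∫₀ᵗ ‖∫₀ˢ exp(−(s−τ)H̄) ΔH̄(τ) Δη(τ) dτ‖ ds ≤ q ∫₀ᵗ ‖Δη(s)‖ ds. -/
theorem stmt2 {n : ℕ} (H : Matrix (Fin n) (Fin n) ℝ) (hH : H.IsHermitian)
    (p : ℝ) (hp : 0 < p) (heig : ∀ i, p ≤ hH.eigenvalues i)
    (t : ℝ) (ht : 0 < t) (q : ℝ) (hq : 0 ≤ q)
    (ΔH : ℝ → Matrix (Fin n) (Fin n) ℝ)
    (hΔcont : ContinuousOn ΔH (Set.Icc 0 t))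
    (hΔ : ∀ τ ∈ Set.Icc (0 : ℝ) t, opNorm (ΔH τ) ≤ q * p)
    (Δη : ℝ → EuclideanSpace ℝ (Fin n)) (hΔη : ContinuousOn Δη (Set.Icc 0 t)) :
    ∫ s in (0 : ℝ)..t,
        ‖∫ τ in (0 : ℝ)..s,
            Matrix.toEuclideanLin (NormedSpace.exp (-((s - τ) • H)) * ΔH τ) (Δη τ)‖
      ≤ q * ∫ s in (0 : ℝ)..t, ‖Δη s‖ := by
  -- clamped versions of `Δη` and `ΔH`
  have hproj : ∀ x : ℝ, ((Set.projIcc (0 : ℝ) t ht.le x : ℝ)) ∈ Set.Icc (0 : ℝ) t :=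
    fun x => (Set.projIcc (0 : ℝ) t ht.le x).2
  have hprojc : Continuous fun x : ℝ => ((Set.projIcc (0 : ℝ) t ht.le x : ℝ)) :=
    continuous_subtype_val.comp continuous_projIcc
  set η' : ℝ → EuclideanSpace ℝ (Fin n) :=
    fun x => Δη ((Set.projIcc (0 : ℝ) t ht.le x : ℝ)) with hη'
  set D' : ℝ → Matrix (Fin n) (Fin n) ℝ :=
    fun x => ΔH ((Set.projIcc (0 : ℝ) t ht.le x : ℝ)) with hD'
  have hη'c : Continuous η' := hΔη.comp_continuous hprojc hproj
  have hD'c : Continuous D' := hΔcont.comp_continuous hprojc hproj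
  have hη'eq : ∀ x ∈ Set.Icc (0 : ℝ) t, η' x = Δη x := fun x hx => by
    rw [hη']; simp [Set.projIcc_of_mem ht.le hx]
  have hD'eq : ∀ x ∈ Set.Icc (0 : ℝ) t, D' x = ΔH x := fun x hx => by
    rw [hD']; simp [Set.projIcc_of_mem ht.le hx]
  set g : ℝ → ℝ := fun x => ‖η' x‖ with hgdef
  have hgc : Continuous g := hη'c.norm
  have hg0 : ∀ x, 0 ≤ g x := fun x => norm_nonneg _
  have hgeq : ∀ x ∈ Set.Icc (0 : ℝ) t, g x = ‖Δη x‖ := fun x hx => by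
    rw [hgdef]; simp [hη'eq x hx]
  -- the primitive `G`
  set G : ℝ → ℝ := fun s => ∫ τ in (0 : ℝ)..s, Real.exp (τ * p) * g τ with hGdef
  have hinnc : Continuous fun τ : ℝ => Real.exp (τ * p) * g τ :=
    (Real.continuous_exp.comp (continuous_id.mul continuous_const)).mul hgc
  have hGd : ∀ s : ℝ, HasDerivAt G (Real.exp (s * p) * g s) s := fun s =>
    (hinnc.integral_hasStrictDerivAt 0 s).hasDerivAt
  have hGc : Continuous G :=
    continuous_iff_continuousAt.mpr fun s => (hGd s).continuousAt
  have hGnn : ∀ s, 0 ≤ s → 0 ≤ G s := fun s hs =>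
    intervalIntegral.integral_nonneg hs fun τ _ =>
      mul_nonneg (Real.exp_pos _).le (hg0 τ)
  set B : ℝ → ℝ := fun s => q * p * (Real.exp (-(s * p)) * G s) with hBdef
  have hBc : Continuous B :=
    continuous_const.mul ((Real.continuous_exp.comp
      (continuous_id.mul continuous_const).neg).mul hGc)
  -- derivative of φ
  set φ : ℝ → ℝ := fun s => -q * (Real.exp (-(s * p)) * G s) with hφdef
  have hφd : ∀ s : ℝ, HasDerivAt φ (B s - q * g s) s := by
    intro s
    have h1 : HasDerivAt (fun s : ℝ => Real.exp (-(s * p)))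
        (Real.exp (-(s * p)) * -(1 * p)) s :=
      (((hasDerivAt_id s).mul_const p).neg).exp
    have h2 := (h1.mul (hGd s)).const_mul (-q)
    have hee : Real.exp (-(s * p)) * Real.exp (s * p) = 1 := by
      rw [← Real.exp_add]; simp
    convert h2 using 1
    show B s - q * g s = _
    simp only [hBdef]
    linear_combination (q * g s) * hee
    all_goals rfl
  -- Claim 1 : pointwise bound
  have claim1 : ∀ s ∈ Set.Icc (0 : ℝ) t,
      ‖∫ τ in (0 : ℝ)..s,
          Matrix.toEuclideanLin (NormedSpace.exp (-((s - τ) • H)) * ΔH τ) (Δη τ)‖ ≤ B s := by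
    intro s hs
    obtain ⟨h0s, hst⟩ := hs
    have hsub : Set.Icc (0 : ℝ) s ⊆ Set.Icc (0 : ℝ) t := Set.Icc_subset_Icc le_rfl hst
    -- replace by the clamped integrand
    have hcongr : (∫ τ in (0 : ℝ)..s,
          Matrix.toEuclideanLin (NormedSpace.exp (-((s - τ) • H)) * ΔH τ) (Δη τ))
        = ∫ τ in (0 : ℝ)..s,
          Matrix.toEuclideanLin (NormedSpace.exp (-((s - τ) • H)) * D' τ) (η' τ) := by
      apply intervalIntegral.integral_congr
      intro τ hτ
      rw [Set.uIcc_of_le h0s] at hτ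
      simp only [hD'eq τ (hsub hτ), hη'eq τ (hsub hτ)]
    rw [hcongr]
    -- continuity of the clamped integrand
    have hexpc : Continuous fun τ : ℝ => NormedSpace.exp (-((s - τ) • H)) := by
      letI : SeminormedRing (Matrix (Fin n) (Fin n) ℝ) := Matrix.linftyOpSemiNormedRing
      letI : NormedRing (Matrix (Fin n) (Fin n) ℝ) := Matrix.linftyOpNormedRing
      letI : NormedAlgebra ℝ (Matrix (Fin n) (Fin n) ℝ) := Matrix.linftyOpNormedAlgebra
      letI : NormedAlgebra ℚ (Matrix (Fin n) (Fin n) ℝ) := Matrix.linftyOpNormedAlgebra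
      exact NormedSpace.exp_continuous.comp
        (((continuous_const.sub continuous_id).smul continuous_const).neg)
    have hFc : Continuous fun τ : ℝ =>
        Matrix.toEuclideanLin (NormedSpace.exp (-((s - τ) • H)) * D' τ) (η' τ) := by
      have h1 : Continuous fun τ : ℝ =>
          (NormedSpace.exp (-((s - τ) • H)) * D' τ) *ᵥ
            ((η' τ).ofLp) :=
        (hexpc.matrix_mul hD'c).matrix_mulVec
          ((PiLp.continuous_ofLp 2 (fun _ : Fin n => ℝ)).comp hη'c)
      have h2 := (PiLp.continuous_toLp 2 (fun _ : Fin n => ℝ)).comp h1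
      simpa only [Matrix.toEuclideanLin_apply, Function.comp_def] using h2
    -- bound function
    have hbc : Continuous fun τ : ℝ => Real.exp (-((s - τ) * p)) * ((q * p) * g τ) :=
      (Real.continuous_exp.comp
        (((continuous_const.sub continuous_id).mul continuous_const).neg)).mul
        (continuous_const.mul hgc)
    calc ‖∫ τ in (0 : ℝ)..s,
            Matrix.toEuclideanLin (NormedSpace.exp (-((s - τ) • H)) * D' τ) (η' τ)‖
        ≤ ∫ τ in (0 : ℝ)..s,
            ‖Matrix.toEuclideanLin (NormedSpace.exp (-((s - τ) • H)) * D' τ) (η' τ)‖ :=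
          intervalIntegral.norm_integral_le_integral_norm h0s
      _ ≤ ∫ τ in (0 : ℝ)..s, Real.exp (-((s - τ) * p)) * ((q * p) * g τ) := by
          apply intervalIntegral.integral_mono_on h0s
            (hFc.norm.intervalIntegrable 0 s) (hbc.intervalIntegrable 0 s)
          intro τ hτ
          have hτt : τ ∈ Set.Icc (0 : ℝ) t := hsub hτ
          have hb := my_key_bound H hH p heig (s - τ) (by linarith [hτ.2]) (D' τ) (η' τ)
          refine hb.trans ?_
          have hop : opNorm (D' τ) ≤ q * p := by rw [hD'eq τ hτt]; exact hΔ τ hτt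
          exact mul_le_mul_of_nonneg_left
            (mul_le_mul_of_nonneg_right hop (norm_nonneg _)) (Real.exp_pos _).le
      _ = B s := by
          have hptw : ∀ τ : ℝ, Real.exp (-((s - τ) * p)) * ((q * p) * g τ)
              = (q * p * Real.exp (-(s * p))) * (Real.exp (τ * p) * g τ) := by
            intro τ
            rw [show -((s - τ) * p) = -(s * p) + τ * p by ring, Real.exp_add]
            ring
          simp_rw [hptw]
          rw [intervalIntegral.integral_const_mul]
          simp only [hBdef, hGdef]
          ring
  -- put the pieces together
  have hLHS : (∫ s in (0 : ℝ)..t,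
        ‖∫ τ in (0 : ℝ)..s,
            Matrix.toEuclideanLin (NormedSpace.exp (-((s - τ) • H)) * ΔH τ) (Δη τ)‖)
      ≤ ∫ s in (0 : ℝ)..t, B s := by
    rw [intervalIntegral.integral_of_le ht.le, intervalIntegral.integral_of_le ht.le]
    refine MeasureTheory.integral_mono_of_nonneg
      (Filter.Eventually.of_forall fun s => norm_nonneg _)
      (hBc.integrableOn_Ioc) ?_
    filter_upwards [MeasureTheory.ae_restrict_mem measurableSet_Ioc] with s hs
    exact claim1 s ⟨hs.1.le, hs.2⟩
  have hint : ∫ s in (0 : ℝ)..t, (B s - q * g s) = φ t - φ 0 :=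
    intervalIntegral.integral_eq_sub_of_hasDerivAt (fun s _ => hφd s)
      ((hBc.sub (continuous_const.mul hgc)).intervalIntegrable 0 t)
  have hsplit : ∫ s in (0 : ℝ)..t, (B s - q * g s)
      = (∫ s in (0 : ℝ)..t, B s) - q * ∫ s in (0 : ℝ)..t, g s := by
    rw [intervalIntegral.integral_sub (g := fun s => q * g s) (hBc.intervalIntegrable 0 t)
      ((continuous_const.mul hgc : Continuous fun s => q * g s).intervalIntegrable 0 t),
      intervalIntegral.integral_const_mul, intervalIntegral.integral_const_mul]
  have hφ0 : φ 0 = 0 := by simp [hφdef, hGdef]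
  have hφt : φ t ≤ 0 := by
    have h1 : 0 ≤ Real.exp (-(t * p)) * G t := mul_nonneg (Real.exp_pos _).le (hGnn t ht.le)
    simp only [hφdef]
    nlinarith
  have hBint : (∫ s in (0 : ℝ)..t, B s) ≤ q * ∫ s in (0 : ℝ)..t, g s := by
    have h2 := hint.symm.trans hsplit
    linarith
  have hgfin : ∫ s in (0 : ℝ)..t, g s = ∫ s in (0 : ℝ)..t, ‖Δη s‖ := by
    apply intervalIntegral.integral_congr
    intro x hx
    rw [Set.uIcc_of_le ht.le] at hx
    exact hgeq x hx
  calc (∫ s in (0 : ℝ)..t,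
        ‖∫ τ in (0 : ℝ)..s,
            Matrix.toEuclideanLin (NormedSpace.exp (-((s - τ) • H)) * ΔH τ) (Δη τ)‖)
      ≤ ∫ s in (0 : ℝ)..t, B s := hLHS
    _ ≤ q * ∫ s in (0 : ℝ)..t, g s := hBint
    _ = q * ∫ s in (0 : ℝ)..t, ‖Δη s‖ := by rw [hgfin]
end

section
/- Let n ∈ ℕ, let H̄ be an n×n real symmetric matrix all of whose eigenvalues are ≥ p for some p > 0, let t > 0, let q ≥ 0, and let ΔH̄ : ℝ → (n×n real matrices) be continuous on [0,t] with ‖ΔH̄(τ)‖_op ≤ q·p for all τ ∈ [0,t]. Then for every η₀ ∈ ℝⁿ, ∫₀ᵗ ‖ ∫₀ˢ exp(−(s−τ) H̄) ΔH̄(τ) exp(−τ H̄) η₀ dτ ‖ ds ≤ (q/p) ‖η₀‖. -/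
lemma opNorm_nonneg {n : ℕ} (A : Matrix (Fin n) (Fin n) ℝ) : 0 ≤ opNorm A :=
  norm_nonneg _

lemma le_opNorm' {n : ℕ} (A : Matrix (Fin n) (Fin n) ℝ) (x : EuclideanSpace ℝ (Fin n)) :
    ‖Matrix.toEuclideanLin A x‖ ≤ opNorm A * ‖x‖ :=
  (LinearMap.toContinuousLinearMap (Matrix.toEuclideanLin A)).le_opNorm x

open scoped Matrix.Norms.L2Operator in
lemma opNorm_mul_le {n : ℕ} (A B : Matrix (Fin n) (Fin n) ℝ) :
    opNorm (A * B) ≤ opNorm A * opNorm B :=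
  Matrix.l2_opNorm_mul A B

open scoped Matrix.Norms.L2Operator in
lemma opNorm_unitary_conj {n : ℕ} {U : Matrix (Fin n) (Fin n) ℝ}
    (hU : U ∈ unitary (Matrix (Fin n) (Fin n) ℝ)) (A : Matrix (Fin n) (Fin n) ℝ) :
    opNorm (U * A * star U) = opNorm A := by
  show ‖U * A * star U‖ = ‖A‖
  rw [CStarRing.norm_mul_mem_unitary _ (Unitary.star_mem hU),
    CStarRing.norm_mem_unitary_mul _ hU]

lemma opNorm_diagonal_le {n : ℕ} (d : Fin n → ℝ) (c : ℝ) (hc : 0 ≤ c)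
    (hd : ∀ i, |d i| ≤ c) : opNorm (Matrix.diagonal d) ≤ c := by
  refine ContinuousLinearMap.opNorm_le_bound _ hc (fun x => ?_)
  show ‖Matrix.toEuclideanLin (Matrix.diagonal d) x‖ ≤ c * ‖x‖
  rw [EuclideanSpace.norm_eq, EuclideanSpace.norm_eq, ← Real.sqrt_sq hc,
    ← Real.sqrt_mul (by positivity)]
  apply Real.sqrt_le_sqrt
  rw [Finset.mul_sum]
  apply Finset.sum_le_sum
  intro i _
  have hentry : (Matrix.toEuclideanLin (Matrix.diagonal d) x) i = d i * x i := by
    simp [Matrix.toEuclideanLin_apply, Matrix.mulVec_diagonal]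
  rw [hentry]
  have h1 : ‖d i * x i‖ = |d i| * ‖x i‖ := by
    simp [abs_mul, Real.norm_eq_abs]
  rw [h1, mul_pow]
  have := hd i
  have h2 : |d i| ^ 2 ≤ c ^ 2 := by nlinarith [abs_nonneg (d i)]
  nlinarith [sq_nonneg ‖x i‖, abs_nonneg (d i)]

lemma opNorm_exp_le {n : ℕ} (H : Matrix (Fin n) (Fin n) ℝ) (hH : H.IsHermitian)
    (p : ℝ) (heig : ∀ i, p ≤ hH.eigenvalues i) {s : ℝ} (hs : 0 ≤ s) :
    opNorm (NormedSpace.exp (-(s • H))) ≤ Real.exp (-(p * s)) := by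
  set U : Matrix (Fin n) (Fin n) ℝ := ↑(hH.eigenvectorUnitary) with hUdef
  have hU : U ∈ unitary (Matrix (Fin n) (Fin n) ℝ) := hH.eigenvectorUnitary.2
  have hUU : star U * U = 1 := Unitary.star_mul_self_of_mem hU
  have hUU' : U * star U = 1 := Unitary.mul_star_self_of_mem hU
  have hinv : U⁻¹ = star U := Matrix.inv_eq_left_inv hUU
  have h1 : -(s • H) = U * Matrix.diagonal (fun i => -(s * hH.eigenvalues i)) * U⁻¹ := by
    rw [hinv]
    conv_lhs => rw [hH.spectral_theorem, Unitary.conjStarAlgAut_apply]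
    rw [show (RCLike.ofReal ∘ hH.eigenvalues : Fin n → ℝ) = hH.eigenvalues from rfl]
    rw [← Matrix.diagonal_neg, ← hUdef]
    have hd : s • Matrix.diagonal hH.eigenvalues
        = Matrix.diagonal (fun i => s * hH.eigenvalues i) := by
      ext i j
      by_cases h : i = j <;> simp [h, Matrix.diagonal_apply]
    rw [← smul_mul_assoc, ← mul_smul_comm, hd, neg_mul_eq_neg_mul, neg_mul_eq_mul_neg]
  rw [h1, Matrix.exp_conj U _ (isUnit_iff_exists.mpr ⟨star U, hUU', hUU⟩), hinv,
    Matrix.exp_diagonal, Pi.exp_def]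
  rw [opNorm_unitary_conj hU]
  apply opNorm_diagonal_le _ _ (Real.exp_pos _).le
  intro i
  rw [← Real.exp_eq_exp_ℝ, abs_of_pos (Real.exp_pos _)]
  apply Real.exp_le_exp.mpr
  have := mul_le_mul_of_nonneg_left (heig i) hs
  nlinarith

/-- Bound on the first Picard iterate from the proof of Lemma 1 of the supplement:
∫₀ᵗ ‖∫₀ˢ exp(−(s−τ)H̄) ΔH̄(τ) exp(−τH̄) η₀ dτ‖ ds ≤ (q/p) ‖η₀‖. -/
theorem stmt3 {n : ℕ} (H : Matrix (Fin n) (Fin n) ℝ) (hH : H.IsHermitian)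
    (p : ℝ) (hp : 0 < p) (heig : ∀ i, p ≤ hH.eigenvalues i)
    (t : ℝ) (ht : 0 < t) (q : ℝ) (hq : 0 ≤ q)
    (ΔH : ℝ → Matrix (Fin n) (Fin n) ℝ)
    (hΔcont : ContinuousOn ΔH (Set.Icc 0 t))
    (hΔ : ∀ τ ∈ Set.Icc (0 : ℝ) t, opNorm (ΔH τ) ≤ q * p)
    (η₀ : EuclideanSpace ℝ (Fin n)) :
    ∫ s in (0 : ℝ)..t,
        ‖∫ τ in (0 : ℝ)..s,
            Matrix.toEuclideanLin
              (NormedSpace.exp (-((s - τ) • H)) * ΔH τ * NormedSpace.exp (-(τ • H))) η₀‖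
      ≤ (q / p) * ‖η₀‖ := by
  set c : ℝ := q * p * ‖η₀‖ with hc
  have hc0 : 0 ≤ c := by positivity
  -- Step 1: pointwise bound on the inner integral
  have step1 : ∀ s ∈ Set.Ioc (0 : ℝ) t,
      ‖∫ τ in (0 : ℝ)..s,
          Matrix.toEuclideanLin
            (NormedSpace.exp (-((s - τ) • H)) * ΔH τ * NormedSpace.exp (-(τ • H))) η₀‖
        ≤ c * (Real.exp (-(p * s)) * s) := by
    intro s hs
    have hbound : ∀ τ ∈ Set.uIoc (0 : ℝ) s,
        ‖Matrix.toEuclideanLin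
            (NormedSpace.exp (-((s - τ) • H)) * ΔH τ * NormedSpace.exp (-(τ • H))) η₀‖
          ≤ c * Real.exp (-(p * s)) := by
      intro τ hτ
      rw [Set.uIoc_of_le hs.1.le] at hτ
      have hτ0 : 0 ≤ τ := hτ.1.le
      have hτs : τ ≤ s := hτ.2
      set A1 := NormedSpace.exp (-((s - τ) • H)) with hA1
      set A3 := NormedSpace.exp (-(τ • H)) with hA3
      have b1 : opNorm A1 ≤ Real.exp (-(p * (s - τ))) :=
        opNorm_exp_le H hH p heig (by linarith)
      have b2 : opNorm (ΔH τ) ≤ q * p := hΔ τ ⟨hτ0, hτ.2.trans hs.2⟩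
      have b3 : opNorm A3 ≤ Real.exp (-(p * τ)) := opNorm_exp_le H hH p heig hτ0
      have n1 := opNorm_nonneg A1
      have n2 := opNorm_nonneg (ΔH τ)
      have n3 := opNorm_nonneg A3
      calc ‖Matrix.toEuclideanLin (A1 * ΔH τ * A3) η₀‖
          ≤ opNorm (A1 * ΔH τ * A3) * ‖η₀‖ := le_opNorm' _ _
        _ ≤ (opNorm (A1 * ΔH τ) * opNorm A3) * ‖η₀‖ := by
            gcongr; exact opNorm_mul_le _ _
        _ ≤ ((opNorm A1 * opNorm (ΔH τ)) * opNorm A3) * ‖η₀‖ := by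
            gcongr; exact opNorm_mul_le _ _
        _ ≤ ((Real.exp (-(p * (s - τ))) * (q * p)) * Real.exp (-(p * τ))) * ‖η₀‖ := by
            gcongr <;> positivity
        _ = (Real.exp (-(p * (s - τ))) * Real.exp (-(p * τ))) * (q * p * ‖η₀‖) := by ring
        _ = c * Real.exp (-(p * s)) := by
            rw [← Real.exp_add, show -(p * (s - τ)) + -(p * τ) = -(p * s) by ring]
            ring
    have h := intervalIntegral.norm_integral_le_of_norm_le_const hbound
    rw [sub_zero, abs_of_pos hs.1] at h
    calc _ ≤ c * Real.exp (-(p * s)) * s := h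
      _ = c * (Real.exp (-(p * s)) * s) := by ring
  -- Step 2: compare integrals
  have hgcont : Continuous fun s : ℝ => c * (Real.exp (-(p * s)) * s) := by
    fun_prop
  rw [intervalIntegral.integral_of_le ht.le]
  have step2 :
      (∫ s in Set.Ioc (0 : ℝ) t,
        ‖∫ τ in (0 : ℝ)..s,
            Matrix.toEuclideanLin
              (NormedSpace.exp (-((s - τ) • H)) * ΔH τ * NormedSpace.exp (-(τ • H))) η₀‖)
        ≤ ∫ s in Set.Ioc (0 : ℝ) t, c * (Real.exp (-(p * s)) * s) := by
    apply MeasureTheory.integral_mono_of_nonneg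
    · filter_upwards with s using norm_nonneg _
    · exact hgcont.integrableOn_Ioc
    · exact (MeasureTheory.ae_restrict_iff' measurableSet_Ioc).mpr
        (MeasureTheory.ae_of_all _ step1)
  refine step2.trans ?_
  -- Step 3: compute the explicit integral
  have hG : ∀ s : ℝ, HasDerivAt (fun u : ℝ => -((u * p + 1) / p ^ 2 * Real.exp (-(p * u))))
      (Real.exp (-(p * s)) * s) s := by
    intro s
    have h1 : HasDerivAt (fun u : ℝ => (u * p + 1) / p ^ 2) (p / p ^ 2) s := by
      simpa using (((hasDerivAt_id s).mul_const p).add_const 1).div_const (p ^ 2)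
    have h2 : HasDerivAt (fun u : ℝ => Real.exp (-(p * u))) (Real.exp (-(p * s)) * (-p)) s := by
      simpa using (((hasDerivAt_id s).const_mul p).neg).exp
    have := (h1.mul h2).neg
    refine this.congr_deriv ?_
    have hp0 : p ≠ 0 := hp.ne'
    field_simp
    ring
  have hint : IntervalIntegrable (fun s : ℝ => Real.exp (-(p * s)) * s) MeasureTheory.volume 0 t :=
    (by fun_prop : Continuous fun s : ℝ => Real.exp (-(p * s)) * s).intervalIntegrable _ _
  rw [← intervalIntegral.integral_of_le ht.le, intervalIntegral.integral_const_mul,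
    intervalIntegral.integral_eq_sub_of_hasDerivAt (fun s _ => hG s) hint]
  have hexp : 0 < Real.exp (-(p * t)) := Real.exp_pos _
  have hval : -((t * p + 1) / p ^ 2 * Real.exp (-(p * t)))
      - -((0 * p + 1) / p ^ 2 * Real.exp (-(p * 0))) ≤ 1 / p ^ 2 := by
    rw [mul_zero, neg_zero, Real.exp_zero, zero_mul, zero_add, mul_one]
    have htp : 0 < (t * p + 1) / p ^ 2 := by positivity
    nlinarith [mul_pos htp hexp]
  calc c * (-((t * p + 1) / p ^ 2 * Real.exp (-(p * t)))
        - -((0 * p + 1) / p ^ 2 * Real.exp (-(p * 0))))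
      ≤ c * (1 / p ^ 2) := mul_le_mul_of_nonneg_left hval hc0
    _ = (q / p) * ‖η₀‖ := by
        rw [hc]
        field_simp
end

section
/- Let n, m ∈ ℕ, let λ ≥ 0, let a₁,…,a_m be real numbers, and for each k ∈ {1,…,m} let ΔH_k be an n×n real matrix. Let ΔH̄ be the (nm)×(nm) real block matrix, with blocks indexed by k,l ∈ {1,…,m}, whose (k,l) block is the n×n matrix (a_k a_l/m + λ δ_{kl}) ΔH_k, where δ_{kl} is the Kronecker delta. Then ‖ΔH̄‖_op ≤ √2 · √(λ² + a²) · max_{1≤k≤m} ‖ΔH_k‖_op, where a := Σ_{k=1}^m a_k²/m. -/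
lemma opNorm_nonneg' {ι κ : Type*} [Fintype ι] [Fintype κ] [DecidableEq κ]
    (A : Matrix ι κ ℝ) : 0 ≤ opNorm A := norm_nonneg _

lemma mulVec_norm_le' {ι κ : Type*} [Fintype ι] [Fintype κ] [DecidableEq κ]
    (A : Matrix ι κ ℝ) (v : κ → ℝ) :
    Real.sqrt (∑ i, (A.mulVec v i)^2) ≤ opNorm A * Real.sqrt (∑ j, (v j)^2) := by
  have h := (LinearMap.toContinuousLinearMap (Matrix.toEuclideanLin A)).le_opNorm
    ((WithLp.equiv 2 (κ → ℝ)).symm v)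
  simpa [opNorm, Matrix.toEuclideanLin_apply, EuclideanSpace.norm_eq, Real.norm_eq_abs,
    sq_abs] using h

lemma mulVec_sq_le' {ι κ : Type*} [Fintype ι] [Fintype κ] [DecidableEq κ]
    (A : Matrix ι κ ℝ) (v : κ → ℝ) :
    ∑ i, (A.mulVec v i)^2 ≤ opNorm A ^ 2 * ∑ j, (v j)^2 := by
  have h := mulVec_norm_le' A v
  have h1 : (0:ℝ) ≤ ∑ i, (A.mulVec v i)^2 := Finset.sum_nonneg fun i _ => sq_nonneg _
  have h2 : (0:ℝ) ≤ ∑ j, (v j)^2 := Finset.sum_nonneg fun j _ => sq_nonneg _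
  nlinarith [Real.sq_sqrt h1, Real.sq_sqrt h2, Real.sqrt_nonneg (∑ i, (A.mulVec v i)^2),
    Real.sqrt_nonneg (∑ j, (v j)^2)]

set_option maxHeartbeats 1000000 in
/-- Supplement, Lemma 2: the spectral norm of the block matrix ΔH̄, whose (k,l) block is
(aₖaₗ/m + λδ_{kl}) ΔHₖ, is at most √2 √(λ² + a²) maxₖ ‖ΔHₖ‖_op, where a = Σₖ aₖ²/m. -/
theorem stmt4 {n m : ℕ} (lam : ℝ) (hlam : 0 ≤ lam) (a : Fin m → ℝ)
    (ΔH : Fin m → Matrix (Fin n) (Fin n) ℝ)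
    (abar : ℝ) (habar : abar = ∑ k, a k ^ 2 / (m : ℝ))
    (Hbar : Matrix (Fin m × Fin n) (Fin m × Fin n) ℝ)
    (hHbar : ∀ k l i j, Hbar (k, i) (l, j) =
      (a k * a l / (m : ℝ) + lam * (if k = l then 1 else 0)) * ΔH k i j) :
    opNorm Hbar ≤ Real.sqrt 2 * Real.sqrt (lam ^ 2 + abar ^ 2) * ⨆ k, opNorm (ΔH k) := by
  rcases Nat.eq_zero_or_pos m with hm | hm
  · subst hm
    have hz : ∀ z : EuclideanSpace ℝ (Fin 0 × Fin n), ‖z‖ = 0 := by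
      intro z
      simp [EuclideanSpace.norm_eq]
    have hL : opNorm Hbar ≤ 0 := by
      refine ContinuousLinearMap.opNorm_le_bound _ le_rfl fun x => ?_
      rw [hz, hz]
      simp
    have : (⨆ k : Fin 0, opNorm (ΔH k)) = 0 := Real.iSup_of_isEmpty _
    rw [this, mul_zero]
    exact hL
  -- main case
  have hm0 : (m : ℝ) ≠ 0 := by positivity
  have hmpos : (0:ℝ) < m := by exact_mod_cast hm
  haveI : Nonempty (Fin m) := ⟨⟨0, hm⟩⟩
  set M : ℝ := ⨆ k, opNorm (ΔH k) with hM
  have hMk : ∀ k, opNorm (ΔH k) ≤ M := by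
    intro k
    rw [hM]
    exact le_ciSup (Set.Finite.bddAbove (Set.finite_range fun k => opNorm (ΔH k))) k
  have hM0 : 0 ≤ M := le_trans (opNorm_nonneg' (ΔH (Classical.arbitrary _))) (hMk _)
  clear_value M
  have habar0 : 0 ≤ abar := by
    rw [habar]
    exact Finset.sum_nonneg fun k _ => div_nonneg (sq_nonneg _) hmpos.le
  have hsuma : ∑ k, a k ^ 2 = m * abar := by
    rw [habar, ← Finset.sum_div]
    field_simp
  set C : ℝ := Real.sqrt 2 * Real.sqrt (lam ^ 2 + abar ^ 2) * M with hC
  have hC0 : 0 ≤ C := by positivity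
  clear_value C
  refine ContinuousLinearMap.opNorm_le_bound _ hC0 fun x => ?_
  have hxapp : (LinearMap.toContinuousLinearMap (Matrix.toEuclideanLin Hbar)) x
      = (WithLp.equiv 2 ((Fin m × Fin n) → ℝ)).symm
        (Hbar.mulVec ((WithLp.equiv 2 ((Fin m × Fin n) → ℝ)) x)) := by
    simp [Matrix.toEuclideanLin_apply]
  set xf : (Fin m × Fin n) → ℝ := (WithLp.equiv 2 ((Fin m × Fin n) → ℝ)) x with hxf
  set y : (Fin m × Fin n) → ℝ := Hbar.mulVec xf with hy
  set s : Fin n → ℝ := fun j => ∑ l, a l * xf (l, j) with hs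
  clear_value xf y
  -- pointwise formula for y
  have hyf : ∀ k i, y (k, i) = lam * ((ΔH k).mulVec (fun j => xf (k, j)) i)
      + (a k / m) * ((ΔH k).mulVec s i) := by
    intro k i
    simp only [hy, Matrix.mulVec, dotProduct, hs]
    rw [Fintype.sum_prod_type, Finset.sum_comm]
    rw [Finset.mul_sum, Finset.mul_sum, ← Finset.sum_add_distrib]
    refine Finset.sum_congr rfl fun j _ => ?_
    have key : ∀ l, Hbar (k, i) (l, j) * xf (l, j)
        = (if k = l then lam * (ΔH k i j * xf (k, j)) else 0)
          + (a k / m) * (ΔH k i j * (a l * xf (l, j))) := by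
      intro l
      rw [hHbar]
      by_cases h : k = l
      · subst h; simp; ring
      · simp [h]; ring
    rw [Finset.sum_congr rfl fun l _ => key l, Finset.sum_add_distrib,
      Finset.sum_ite_eq, if_pos (Finset.mem_univ k), ← Finset.mul_sum, ← Finset.mul_sum]
  -- squared sums
  have hX : ∑ p, (xf p)^2 = ∑ k, ∑ i, (xf (k, i))^2 := by
    rw [Fintype.sum_prod_type]
  set X : ℝ := ∑ p, (xf p)^2 with hXdef
  have hX0 : 0 ≤ X := Finset.sum_nonneg fun p _ => sq_nonneg _
  clear_value X
  -- Cauchy–Schwarz bound on s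
  have hS : ∑ j, (s j)^2 ≤ (m * abar) * X := by
    have hj : ∀ j, (s j)^2 ≤ (∑ l, a l ^ 2) * ∑ l, (xf (l, j))^2 := by
      intro j
      simpa using Finset.sum_mul_sq_le_sq_mul_sq Finset.univ a (fun l => xf (l, j))
    calc ∑ j, (s j)^2 ≤ ∑ j, (∑ l, a l ^ 2) * ∑ l, (xf (l, j))^2 :=
          Finset.sum_le_sum fun j _ => hj j
      _ = (∑ l, a l ^ 2) * ∑ j, ∑ l, (xf (l, j))^2 := by rw [Finset.mul_sum]
      _ = (m * abar) * X := by
          rw [hsuma, hX, Finset.sum_comm]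
  set S2 : ℝ := ∑ j, (s j)^2 with hS2def
  have hS20 : 0 ≤ S2 := Finset.sum_nonneg fun j _ => sq_nonneg _
  clear_value S2
  -- per-block bound
  have hblock : ∀ k, ∑ i, (y (k, i))^2
      ≤ 2 * M^2 * (lam^2 * ∑ i, (xf (k, i))^2 + (a k ^ 2 / m^2) * S2) := by
    intro k
    have h1 : ∑ i, ((ΔH k).mulVec (fun j => xf (k, j)) i)^2
        ≤ M^2 * ∑ i, (xf (k, i))^2 := by
      refine (mulVec_sq_le' (ΔH k) _).trans ?_
      have hle := hMk k
      have h0 := opNorm_nonneg' (ΔH k)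
      have hsum0 : (0:ℝ) ≤ ∑ i, (xf (k, i))^2 := Finset.sum_nonneg fun i _ => sq_nonneg _
      have hsq : opNorm (ΔH k)^2 ≤ M^2 := by nlinarith
      exact mul_le_mul_of_nonneg_right hsq hsum0
    have h2 : ∑ i, ((ΔH k).mulVec s i)^2 ≤ M^2 * S2 := by
      refine (mulVec_sq_le' (ΔH k) _).trans ?_
      have hle := hMk k
      have h0 := opNorm_nonneg' (ΔH k)
      have hsq : opNorm (ΔH k)^2 ≤ M^2 := by nlinarith
      rw [← hS2def]
      exact mul_le_mul_of_nonneg_right hsq hS20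
    calc ∑ i, (y (k, i))^2
        = ∑ i, (lam * ((ΔH k).mulVec (fun j => xf (k, j)) i)
            + (a k / m) * ((ΔH k).mulVec s i))^2 := by
          refine Finset.sum_congr rfl fun i _ => ?_; rw [hyf]
      _ ≤ ∑ i, (2 * lam^2 * ((ΔH k).mulVec (fun j => xf (k, j)) i)^2
            + 2 * (a k / m)^2 * ((ΔH k).mulVec s i)^2) := by
          refine Finset.sum_le_sum fun i _ => ?_
          nlinarith [sq_nonneg (lam * ((ΔH k).mulVec (fun j => xf (k, j)) i)
            - (a k / m) * ((ΔH k).mulVec s i))]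
      _ = 2 * lam^2 * ∑ i, ((ΔH k).mulVec (fun j => xf (k, j)) i)^2
            + 2 * (a k / m)^2 * ∑ i, ((ΔH k).mulVec s i)^2 := by
          rw [Finset.sum_add_distrib, Finset.mul_sum, Finset.mul_sum]
      _ ≤ 2 * lam^2 * (M^2 * ∑ i, (xf (k, i))^2) + 2 * (a k / m)^2 * (M^2 * S2) := by
          gcongr <;> positivity
      _ = 2 * M^2 * (lam^2 * ∑ i, (xf (k, i))^2 + (a k ^ 2 / m^2) * S2) := by
          rw [div_pow]; ring
  -- total bound
  have htot : ∑ p, (y p)^2 ≤ 2 * M^2 * (lam^2 + abar^2) * X := by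
    calc ∑ p, (y p)^2 = ∑ k, ∑ i, (y (k, i))^2 := by rw [Fintype.sum_prod_type]
      _ ≤ ∑ k, 2 * M^2 * (lam^2 * ∑ i, (xf (k, i))^2 + (a k ^ 2 / m^2) * S2) :=
          Finset.sum_le_sum fun k _ => hblock k
      _ = 2 * M^2 * (lam^2 * X + ((∑ k, a k ^ 2) / m^2) * S2) := by
          rw [hX]
          rw [Finset.sum_div, Finset.sum_mul, ← Finset.mul_sum, Finset.sum_add_distrib,
            ← Finset.mul_sum]
      _ ≤ 2 * M^2 * (lam^2 * X + ((∑ k, a k ^ 2) / m^2) * ((m * abar) * X)) := by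
          have hcoef : (0:ℝ) ≤ (∑ k, a k ^ 2) / (m:ℝ)^2 :=
            div_nonneg (Finset.sum_nonneg fun k _ => sq_nonneg _) (sq_nonneg _)
          exact mul_le_mul_of_nonneg_left
            (add_le_add_right (mul_le_mul_of_nonneg_left hS hcoef) (lam^2 * X))
            (mul_nonneg (by norm_num) (sq_nonneg M))
      _ = 2 * M^2 * (lam^2 + abar^2) * X := by
          rw [hsuma]
          have : ((m:ℝ) * abar) / (m:ℝ)^2 * (((m:ℝ) * abar) * X) = abar^2 * X := by
            field_simp
          rw [this]
          ring
  -- conclude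
  rw [hxapp]
  have hnorm1 : ‖(WithLp.equiv 2 ((Fin m × Fin n) → ℝ)).symm y‖
      = Real.sqrt (∑ p, (y p)^2) := by
    rw [EuclideanSpace.norm_eq]
    congr 1
    refine Finset.sum_congr rfl fun p _ => ?_
    rw [Real.norm_eq_abs, sq_abs]
    rfl
  have hnorm2 : ‖x‖ = Real.sqrt X := by
    rw [hXdef, hxf, EuclideanSpace.norm_eq]
    simp only [Real.norm_eq_abs, sq_abs]
    rfl
  rw [hnorm1, hnorm2]
  have h1 : Real.sqrt (∑ p, (y p)^2) ≤ Real.sqrt (C^2 * X) := by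
    refine Real.sqrt_le_sqrt ?_
    refine htot.trans (le_of_eq ?_)
    have e2 : Real.sqrt 2 ^ 2 = 2 := Real.sq_sqrt (by norm_num)
    have el : Real.sqrt (lam^2 + abar^2) ^ 2 = lam^2 + abar^2 :=
      Real.sq_sqrt (by positivity)
    have : C^2 = 2 * M^2 * (lam^2 + abar^2) := by
      rw [hC, mul_pow, mul_pow, e2, el]; ring
    rw [this]
  refine h1.trans (le_of_eq ?_)
  rw [Real.sqrt_mul (sq_nonneg C), Real.sqrt_sq hC0]
end

section
/- Let x₁,…,x_n ∈ ℝᵈ, let B := max_{1≤i≤n} ‖x_i‖, and let σ_x be the largest singular value of the d×n matrix X whose columns are x₁,…,x_n. Let σ : ℝ → ℝ be differentiable with derivative σ′ satisfying σ′(0) = 0 and |σ′(u) − σ′(v)| ≤ L|u − v| for all u, v ∈ ℝ. For w ∈ ℝᵈ define H(w) as the n×n real matrix with entries H(w)_{ij} = σ′(wᵀx_i) σ′(wᵀx_j) ⟨x_i, x_j⟩. Then for all w, w₀ ∈ ℝᵈ: ‖H(w) − H(w₀)‖_op ≤ L² σ_x² B² ‖w − w₀‖ (‖w − w₀‖ +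 2‖w₀‖). -/
open scoped RealInnerProductSpace
open scoped Matrix.Norms.L2Operator
open Matrix

lemma opNorm_eq_l2 {ι κ : Type*} [Fintype ι] [Fintype κ] [DecidableEq κ]
    (A : Matrix ι κ ℝ) : opNorm A = ‖A‖ := by
  rw [opNorm, Matrix.l2_opNorm_def, LinearEquiv.trans_apply]

lemma diag_norm_le {n : Type*} [Fintype n] [DecidableEq n] (v : n → ℝ) (c : ℝ)
    (hc : 0 ≤ c) (h : ∀ i, |v i| ≤ c) : ‖Matrix.diagonal v‖ ≤ c := by
  rw [Matrix.l2_opNorm_def]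
  apply ContinuousLinearMap.opNorm_le_bound _ hc
  intro u
  simp only [LinearEquiv.trans_apply, LinearMap.coe_toContinuousLinearMap']
  rw [Matrix.toEuclideanLin_apply]
  have h1 : ∀ y : EuclideanSpace ℝ n, ‖y‖ = Real.sqrt (∑ i, (y i)^2) := by
    intro y
    rw [EuclideanSpace.norm_eq]
    congr 1
    simp [sq_abs]
  rw [h1, h1]
  rw [← Real.sqrt_sq hc, ← Real.sqrt_mul (by positivity)]
  apply Real.sqrt_le_sqrt
  rw [Finset.mul_sum]
  apply Finset.sum_le_sum
  intro i _
  have he : (WithLp.toLp 2 (Matrix.diagonal v *ᵥ u.ofLp)).ofLp i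
      = v i * u i := by
    simp [Matrix.mulVec_diagonal]
  rw [he, mul_pow]
  have h2 : (v i)^2 ≤ c^2 := by
    rw [← sq_abs]
    exact pow_le_pow_left₀ (abs_nonneg _) (h i) 2
  exact mul_le_mul_of_nonneg_right h2 (sq_nonneg _)

lemma transpose_norm_eq {m n : Type*} [Fintype m] [Fintype n] [DecidableEq m] [DecidableEq n]
    (A : Matrix m n ℝ) : ‖Aᵀ‖ = ‖A‖ := by
  have : Aᵀ = Aᴴ := by
    ext i j
    simp [Matrix.conjTranspose_apply]
  rw [this, Matrix.l2_opNorm_conjTranspose]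

/-- Supplement, Lemma 3: the perturbation of the associated Gram matrix
H(w)_{ij} = σ′(wᵀxᵢ)σ′(wᵀxⱼ)⟨xᵢ,xⱼ⟩ of a hidden unit is controlled by the movement of
its weight vector: ‖H(w) − H(w₀)‖_op ≤ L²σₓ²B² ‖w−w₀‖ (‖w−w₀‖ + 2‖w₀‖). -/
theorem stmt5 {d n : ℕ} (x : Fin n → EuclideanSpace ℝ (Fin d))
    (B : ℝ) (hB : B = ⨆ i, ‖x i‖)
    (X : Matrix (Fin d) (Fin n) ℝ) (hX : ∀ i j, X i j = x j i)
    (σx : ℝ) (hσx : σx = opNorm X)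
    (L : ℝ) (σ : ℝ → ℝ) (hσ : Differentiable ℝ σ)
    (hσ'0 : deriv σ 0 = 0)
    (hlip : ∀ u v : ℝ, |deriv σ u - deriv σ v| ≤ L * |u - v|)
    (H : EuclideanSpace ℝ (Fin d) → Matrix (Fin n) (Fin n) ℝ)
    (hH : ∀ w i j, H w i j = deriv σ (⟪w, x i⟫) * deriv σ (⟪w, x j⟫) * ⟪x i, x j⟫)
    (w w₀ : EuclideanSpace ℝ (Fin d)) :
    opNorm (H w - H w₀) ≤
      L ^ 2 * σx ^ 2 * B ^ 2 * ‖w - w₀‖ * (‖w - w₀‖ + 2 * ‖w₀‖) := by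
  have hL : 0 ≤ L := by
    have := hlip 1 0
    have h0 : (0:ℝ) ≤ |deriv σ 1 - deriv σ 0| := abs_nonneg _
    simp only [sub_zero, abs_one, mul_one] at this
    linarith
  have hBnn : 0 ≤ B := by
    rw [hB]; exact Real.iSup_nonneg fun i => norm_nonneg _
  have hσxnn : 0 ≤ σx := by rw [hσx, opNorm]; exact norm_nonneg _
  have hxB : ∀ i, ‖x i‖ ≤ B := by
    intro i
    rw [hB]
    exact le_ciSup (f := fun i => ‖x i‖) (Set.Finite.bddAbove (Set.finite_range _)) i
  -- pointwise derivative bounds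
  have hval : ∀ (v : EuclideanSpace ℝ (Fin d)) i, |deriv σ (⟪v, x i⟫)| ≤ L * B * ‖v‖ := by
    intro v i
    have := hlip (⟪v, x i⟫) 0
    rw [hσ'0, sub_zero, sub_zero] at this
    refine this.trans ?_
    rw [mul_assoc]
    apply mul_le_mul_of_nonneg_left _ hL
    calc |⟪v, x i⟫| ≤ ‖v‖ * ‖x i‖ := abs_real_inner_le_norm v (x i)
      _ ≤ B * ‖v‖ := by
          rw [mul_comm]
          exact mul_le_mul_of_nonneg_right (hxB i) (norm_nonneg _)
  have hdiff : ∀ i, |deriv σ (⟪w, x i⟫) - deriv σ (⟪w₀, x i⟫)| ≤ L * B * ‖w - w₀‖ := by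
    intro i
    refine (hlip _ _).trans ?_
    rw [mul_assoc]
    apply mul_le_mul_of_nonneg_left _ hL
    have : ⟪w, x i⟫ - ⟪w₀, x i⟫ = ⟪w - w₀, x i⟫ := by
      rw [inner_sub_left]
    rw [this]
    calc |⟪w - w₀, x i⟫| ≤ ‖w - w₀‖ * ‖x i‖ := abs_real_inner_le_norm _ _
      _ ≤ B * ‖w - w₀‖ := by
          rw [mul_comm]
          exact mul_le_mul_of_nonneg_right (hxB i) (norm_nonneg _)
  -- the factorization H v = (X * D v)ᵀ * (X * D v)
  set D : EuclideanSpace ℝ (Fin d) → Matrix (Fin n) (Fin n) ℝ :=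
    fun v => Matrix.diagonal (fun i => deriv σ (⟪v, x i⟫)) with hD
  have hXD : ∀ v, X * D v = Matrix.of (fun k i => x i k * deriv σ (⟪v, x i⟫)) := by
    intro v
    ext k i
    simp only [hD, Matrix.mul_diagonal, Matrix.of_apply, hX k i]
  have hfac : ∀ v, H v = (X * D v)ᵀ * (X * D v) := by
    intro v
    ext i j
    rw [hH, hXD]
    simp only [Matrix.mul_apply, Matrix.transpose_apply, Matrix.of_apply]
    have hinner : ⟪x i, x j⟫ = ∑ k, x i k * x j k := by
      rw [PiLp.inner_apply]
      simp [RCLike.inner_apply]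
      exact Finset.sum_congr rfl fun _ _ => mul_comm _ _
    rw [hinner, Finset.mul_sum]
    apply Finset.sum_congr rfl
    intro k _
    ring
  -- norm bounds on factors
  have hDnorm : ∀ v, ‖X * D v‖ ≤ σx * (L * B * ‖v‖) := by
    intro v
    calc ‖X * D v‖ ≤ ‖X‖ * ‖D v‖ := Matrix.l2_opNorm_mul X (D v)
      _ ≤ σx * (L * B * ‖v‖) := by
          rw [hσx, opNorm_eq_l2]
          apply mul_le_mul_of_nonneg_left _ (by rw [← opNorm_eq_l2, ← hσx]; exact hσxnn)
          exact diag_norm_le _ _ (by positivity) (hval v)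
  have hdiffmat : X * D w - X * D w₀ = X * Matrix.diagonal
      (fun i => deriv σ (⟪w, x i⟫) - deriv σ (⟪w₀, x i⟫)) := by
    rw [← Matrix.mul_sub]
    congr 1
    rw [hD]
    ext i j
    by_cases h : i = j <;> simp [Matrix.diagonal, h, Matrix.sub_apply]
  have hDdiff : ‖X * D w - X * D w₀‖ ≤ σx * (L * B * ‖w - w₀‖) := by
    rw [hdiffmat]
    calc ‖_‖ ≤ ‖X‖ * ‖Matrix.diagonal (fun i => deriv σ (⟪w, x i⟫) - deriv σ (⟪w₀, x i⟫))‖ :=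
          Matrix.l2_opNorm_mul _ _
      _ ≤ σx * (L * B * ‖w - w₀‖) := by
          rw [hσx, opNorm_eq_l2]
          apply mul_le_mul_of_nonneg_left _ (by rw [← opNorm_eq_l2, ← hσx]; exact hσxnn)
          exact diag_norm_le _ _ (by positivity) hdiff
  -- main estimate
  set A := X * D w with hA
  set A₀ := X * D w₀ with hA₀
  have hsplit : H w - H w₀ = Aᵀ * (A - A₀) + (A - A₀)ᵀ * A₀ := by
    rw [hfac w, hfac w₀]
    simp only [Matrix.transpose_sub, Matrix.mul_sub, Matrix.sub_mul]
    noncomm_ring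
  rw [opNorm_eq_l2, hsplit]
  have hwle : ‖w‖ ≤ ‖w - w₀‖ + ‖w₀‖ := by
    calc ‖w‖ = ‖(w - w₀) + w₀‖ := by rw [sub_add_cancel]
      _ ≤ ‖w - w₀‖ + ‖w₀‖ := norm_add_le _ _
  calc ‖Aᵀ * (A - A₀) + (A - A₀)ᵀ * A₀‖
      ≤ ‖Aᵀ * (A - A₀)‖ + ‖(A - A₀)ᵀ * A₀‖ := norm_add_le _ _
    _ ≤ ‖Aᵀ‖ * ‖A - A₀‖ + ‖(A - A₀)ᵀ‖ * ‖A₀‖ :=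
        add_le_add (Matrix.l2_opNorm_mul _ _) (Matrix.l2_opNorm_mul _ _)
    _ = ‖A‖ * ‖A - A₀‖ + ‖A - A₀‖ * ‖A₀‖ := by rw [transpose_norm_eq, transpose_norm_eq]
    _ ≤ (σx * (L * B * (‖w - w₀‖ + ‖w₀‖))) * (σx * (L * B * ‖w - w₀‖))
        + (σx * (L * B * ‖w - w₀‖)) * (σx * (L * B * ‖w₀‖)) := by
        apply add_le_add
        · apply mul_le_mul ((hDnorm w).trans _) hDdiff (norm_nonneg _) (by positivity)
          apply mul_le_mul_of_nonneg_left _ hσxnn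
          apply mul_le_mul_of_nonneg_left hwle (by positivity)
        · exact mul_le_mul hDdiff (hDnorm w₀) (norm_nonneg _) (by positivity)
    _ = L ^ 2 * σx ^ 2 * B ^ 2 * ‖w - w₀‖ * (‖w - w₀‖ + 2 * ‖w₀‖) := by ring
end

section
/- Let x₁,…,x_n ∈ ℝᵈ, let σ_x be the largest singular value of the d×n matrix X whose columns are x₁,…,x_n, and let σ : ℝ → ℝ be differentiable with |σ′(u)| ≤ L for all u ∈ ℝ. For w ∈ ℝᵈ, let L(w) denote the d×n real matrix whose i-th column is σ′(wᵀx_i) x_i. Let a ∈ ℝ, m > 0, t > 0, let δ : ℝ → ℝⁿ be continuous on [0,t], and suppose w : ℝ → ℝᵈ is differentiable with w′(τ) = −(a/√m) L(w(τ)) δ(τ) for all τ ∈ [0,t]. Then ‖w(t) − w(0)‖ ≤ (|a|/√m) L σ_x ∫₀ᵗ ‖δ(τ)‖ dτ. -/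
open scoped RealInnerProductSpace

/-- Supplement, Lemma 4: for the weight dynamics w′(τ) = −(a/√m) L(w(τ)) δ(τ), where L(w)
has columns σ′(wᵀxᵢ)xᵢ and |σ′| ≤ L, the total movement of the weight vector satisfies
‖w(t) − w(0)‖ ≤ (|a|/√m) L σₓ ∫₀ᵗ ‖δ(τ)‖ dτ. -/
theorem stmt6 {d n : ℕ} (x : Fin n → EuclideanSpace ℝ (Fin d))
    (X : Matrix (Fin d) (Fin n) ℝ) (hX : ∀ i j, X i j = x j i)
    (σx : ℝ) (hσx : σx = opNorm X)
    (L : ℝ) (σ : ℝ → ℝ) (hσ : Differentiable ℝ σ)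
    (hbound : ∀ u : ℝ, |deriv σ u| ≤ L)
    (Lm : EuclideanSpace ℝ (Fin d) → Matrix (Fin d) (Fin n) ℝ)
    (hLm : ∀ v i j, Lm v i j = deriv σ (⟪v, x j⟫) * x j i)
    (a m t : ℝ) (hm : 0 < m) (ht : 0 < t)
    (δ : ℝ → EuclideanSpace ℝ (Fin n)) (hδ : ContinuousOn δ (Set.Icc 0 t))
    (w : ℝ → EuclideanSpace ℝ (Fin d)) (hw : Differentiable ℝ w)
    (hode : ∀ τ ∈ Set.Icc (0 : ℝ) t,
      deriv w τ = -((a / Real.sqrt m) • (Matrix.toEuclideanLin (Lm (w τ))) (δ τ))) :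
    ‖w t - w 0‖ ≤ (|a| / Real.sqrt m) * L * σx * ∫ τ in (0 : ℝ)..t, ‖δ τ‖ := by
  have hL0 : 0 ≤ L := le_trans (abs_nonneg _) (hbound 0)
  have hσx0 : 0 ≤ σx := hσx ▸ norm_nonneg _
  -- key bound on the matrix action
  have key : ∀ (v : EuclideanSpace ℝ (Fin d)) (y : EuclideanSpace ℝ (Fin n)),
      ‖Matrix.toEuclideanLin (Lm v) y‖ ≤ L * σx * ‖y‖ := by
    intro v y
    set D : Matrix (Fin n) (Fin n) ℝ :=
      Matrix.diagonal (fun j => deriv σ (⟪v, x j⟫)) with hD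
    have hdec : Lm v = X * D := by
      ext i j
      rw [hLm, Matrix.mul_diagonal, hX]
      ring
    have hcomp : Matrix.toEuclideanLin (Lm v) y
        = Matrix.toEuclideanLin X (Matrix.toEuclideanLin D y) := by
      rw [hdec, Matrix.toEuclideanLin_eq_toLin, Matrix.toLin_mul _ (PiLp.basisFun 2 ℝ (Fin n)) _]
      rfl
    have hDy : ‖Matrix.toEuclideanLin D y‖ ≤ L * ‖y‖ := by
      have happly : ∀ i, (Matrix.toEuclideanLin D y) i = deriv σ (⟪v, x i⟫) * y i := by
        intro i
        simp [Matrix.toEuclideanLin_apply, hD, Matrix.mulVec_diagonal]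
      rw [EuclideanSpace.norm_eq, EuclideanSpace.norm_eq]
      have hsum : (∑ i, ‖(Matrix.toEuclideanLin D y) i‖ ^ 2)
          ≤ ∑ i, L ^ 2 * ‖y i‖ ^ 2 := by
        refine Finset.sum_le_sum fun i _ => ?_
        rw [happly i]
        have : ‖deriv σ (⟪v, x i⟫) * y i‖ = |deriv σ (⟪v, x i⟫)| * ‖y i‖ := by
          simp [abs_mul, Real.norm_eq_abs]
        rw [this, mul_pow]
        exact mul_le_mul_of_nonneg_right
          (pow_le_pow_left₀ (abs_nonneg _) (hbound _) 2) (sq_nonneg _)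
      calc Real.sqrt (∑ i, ‖(Matrix.toEuclideanLin D y) i‖ ^ 2)
          ≤ Real.sqrt (∑ i, L ^ 2 * ‖y i‖ ^ 2) := Real.sqrt_le_sqrt hsum
        _ = L * Real.sqrt (∑ i, ‖y i‖ ^ 2) := by
            rw [← Finset.mul_sum, Real.sqrt_mul (sq_nonneg L), Real.sqrt_sq hL0]
    have hXz : ∀ z, ‖Matrix.toEuclideanLin X z‖ ≤ σx * ‖z‖ := by
      intro z
      rw [hσx]
      exact (LinearMap.toContinuousLinearMap (Matrix.toEuclideanLin X)).le_opNorm z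
    calc ‖Matrix.toEuclideanLin (Lm v) y‖
        = ‖Matrix.toEuclideanLin X (Matrix.toEuclideanLin D y)‖ := by rw [hcomp]
      _ ≤ σx * ‖Matrix.toEuclideanLin D y‖ := hXz _
      _ ≤ σx * (L * ‖y‖) := by
          exact mul_le_mul_of_nonneg_left hDy hσx0
      _ = L * σx * ‖y‖ := by ring
  set K : ℝ := |a| / Real.sqrt m * (L * σx) with hK
  have hK0 : 0 ≤ K := by positivity
  have habs : |a / Real.sqrt m| = |a| / Real.sqrt m := by
    rw [abs_div, abs_of_nonneg (Real.sqrt_nonneg m)]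
  have hbnd : ∀ τ ∈ Set.Icc (0 : ℝ) t, ‖deriv w τ‖ ≤ K * ‖δ τ‖ := by
    intro τ hτ
    rw [hode τ hτ, norm_neg, norm_smul, Real.norm_eq_abs, habs]
    rw [hK, mul_assoc]
    exact mul_le_mul_of_nonneg_left (key (w τ) (δ τ)) (by positivity)
  -- integrability of the derivative
  have hδnorm : ContinuousOn (fun τ => K * ‖δ τ‖) (Set.Icc 0 t) :=
    continuousOn_const.mul hδ.norm
  have huIcc : Set.uIcc (0 : ℝ) t = Set.Icc 0 t := Set.uIcc_of_le ht.le
  have hgint : IntervalIntegrable (fun τ => K * ‖δ τ‖) MeasureTheory.volume 0 t :=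
    (huIcc ▸ hδnorm).intervalIntegrable
  have hmeas : MeasureTheory.AEStronglyMeasurable (deriv w)
      (MeasureTheory.volume.restrict (Set.uIoc (0 : ℝ) t)) :=
    (stronglyMeasurable_deriv w).aestronglyMeasurable
  have haebnd : ∀ᵐ τ ∂(MeasureTheory.volume.restrict (Set.uIoc (0 : ℝ) t)),
      ‖deriv w τ‖ ≤ K * ‖δ τ‖ := by
    refine (MeasureTheory.ae_restrict_iff' measurableSet_uIoc).2 ?_
    filter_upwards with τ hτ
    have : τ ∈ Set.Icc (0 : ℝ) t := by
      rw [Set.uIoc_of_le ht.le] at hτ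
      exact ⟨hτ.1.le, hτ.2⟩
    exact hbnd τ this
  have hderivint : IntervalIntegrable (deriv w) MeasureTheory.volume 0 t :=
    hgint.mono_fun hmeas (by
      filter_upwards [haebnd] with τ h
      rw [Real.norm_eq_abs, abs_of_nonneg (by positivity : 0 ≤ K * ‖δ τ‖)]
      exact h)
  have hFTC : ∫ τ in (0 : ℝ)..t, deriv w τ = w t - w 0 :=
    intervalIntegral.integral_deriv_eq_sub (fun τ _ => hw τ) hderivint
  calc ‖w t - w 0‖ = ‖∫ τ in (0 : ℝ)..t, deriv w τ‖ := by rw [hFTC]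
    _ ≤ |∫ τ in (0 : ℝ)..t, K * ‖δ τ‖| :=
        intervalIntegral.norm_integral_le_abs_of_norm_le haebnd hgint
    _ = ∫ τ in (0 : ℝ)..t, K * ‖δ τ‖ := abs_of_nonneg
        (intervalIntegral.integral_nonneg ht.le (fun τ _ => by positivity))
    _ = K * ∫ τ in (0 : ℝ)..t, ‖δ τ‖ := intervalIntegral.integral_const_mul _ _
    _ = (|a| / Real.sqrt m) * L * σx * ∫ τ in (0 : ℝ)..t, ‖δ τ‖ := by rw [hK]; ring
end

section
/- Let n, m ∈ ℕ, let H₁,…,H_m be symmetric positive-semidefinite n×n real matrices, let a₁,…,a_m ∈ ℝ, let λ ≥ 0, and let p ∈ ℝ be such that pI − λH_k is invertible for every k. Let H̄ be the (nm)×(nm) real block matrix, with blocks indexed by k,l ∈ {1,…,m}, whose (k,l) block is the n×n matrix (a_k a_l/m + λ δ_{kl}) H_k, where δ_{kl} is the Kronecker delta. Suppose v ∈ ℝⁿ satisfies Σ_{k=1}^m (a_k²/m) (pI − λH_k)^{-1} H_k v = v. Then the block vector η ∈ ℝ^{nm} whose k-th block is v_k := (a_k/√m) (pI − λH_k)^{-1}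 H_k v satisfies H̄ η = p η, and moreover Σ_{k=1}^m (a_k/√m) v_k = v. -/
open scoped Matrix

/-- Supplement, Lemma 5 (right-eigenvector part): if v satisfies
Σₖ (aₖ²/m)(pI − λHₖ)⁻¹Hₖ v = v, then the block vector with blocks
vₖ = (aₖ/√m)(pI − λHₖ)⁻¹Hₖ v is a right eigenvector of the block matrix H̄
(whose (k,l) block is (aₖaₗ/m + λδ_{kl})Hₖ) with eigenvalue p, and Σₖ (aₖ/√m)vₖ = v. -/
theorem stmt7 {n m : ℕ} (H : Fin m → Matrix (Fin n) (Fin n) ℝ)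
    (hH : ∀ k, (H k).PosSemidef)
    (a : Fin m → ℝ) (lam : ℝ) (hlam : 0 ≤ lam) (p : ℝ)
    (hinv : ∀ k, IsUnit (p • (1 : Matrix (Fin n) (Fin n) ℝ) - lam • H k))
    (Hbar : Matrix (Fin m × Fin n) (Fin m × Fin n) ℝ)
    (hHbar : ∀ k l i j, Hbar (k, i) (l, j) =
      (a k * a l / (m : ℝ) + lam * (if k = l then 1 else 0)) * H k i j)
    (v : Fin n → ℝ)
    (hv : ∑ k, (a k ^ 2 / (m : ℝ)) •
        (((p • (1 : Matrix (Fin n) (Fin n) ℝ) - lam • H k)⁻¹ * H k) *ᵥ v) = v)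
    (vk : Fin m → Fin n → ℝ)
    (hvk : ∀ k, vk k = (a k / Real.sqrt m) •
        (((p • (1 : Matrix (Fin n) (Fin n) ℝ) - lam • H k)⁻¹ * H k) *ᵥ v))
    (η : Fin m × Fin n → ℝ) (hη : ∀ k i, η (k, i) = vk k i) :
    Hbar *ᵥ η = p • η ∧ ∑ k, (a k / Real.sqrt m) • vk k = v := by
  have hm : (Real.sqrt m) * (Real.sqrt m) = (m : ℝ) := Real.mul_self_sqrt (Nat.cast_nonneg m)
  have key2 : ∀ k, (a k / Real.sqrt m) • vk k
      = (a k ^ 2 / (m : ℝ)) •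
        (((p • (1 : Matrix (Fin n) (Fin n) ℝ) - lam • H k)⁻¹ * H k) *ᵥ v) := by
    intro k
    rw [hvk, smul_smul]
    congr 1
    rw [div_mul_div_comm, hm, sq]
  have part2 : ∑ k, (a k / Real.sqrt m) • vk k = v := by
    simp_rw [key2]; exact hv
  refine ⟨?_, part2⟩
  have keyA : ∀ k, p • vk k = lam • (H k *ᵥ vk k) + (a k / Real.sqrt m) • (H k *ᵥ v) := by
    intro k
    have hdet := (Matrix.isUnit_iff_isUnit_det _).mp (hinv k)
    have h1 : (p • (1 : Matrix (Fin n) (Fin n) ℝ) - lam • H k) *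
        ((p • (1 : Matrix (Fin n) (Fin n) ℝ) - lam • H k)⁻¹ * H k) = H k := by
      rw [← mul_assoc, Matrix.mul_nonsing_inv _ hdet, one_mul]
    have h2 : (p • (1 : Matrix (Fin n) (Fin n) ℝ) - lam • H k) *ᵥ vk k
        = (a k / Real.sqrt m) • (H k *ᵥ v) := by
      rw [hvk, Matrix.mulVec_smul, Matrix.mulVec_mulVec, h1]
    rw [Matrix.sub_mulVec, Matrix.smul_mulVec, Matrix.smul_mulVec,
      Matrix.one_mulVec] at h2
    rw [sub_eq_iff_eq_add.mp h2, add_comm]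
  have keyB : (∑ l, (a l / (m : ℝ)) • vk l) = (Real.sqrt m)⁻¹ • v := by
    have e : ∀ l, (a l / (m : ℝ)) • vk l = (Real.sqrt m)⁻¹ •
        ((a l ^ 2 / (m : ℝ)) •
          (((p • (1 : Matrix (Fin n) (Fin n) ℝ) - lam • H l)⁻¹ * H l) *ᵥ v)) := by
      intro l
      rw [hvk, smul_smul, smul_smul]
      congr 1
      rw [div_mul_div_comm, pow_two, inv_mul_eq_div, div_div]
    simp_rw [e, ← Finset.smul_sum, hv]
  funext x
  obtain ⟨k, i⟩ := x
  show ∑ y : Fin m × Fin n, Hbar (k, i) y * η y = p * η (k, i)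
  rw [Fintype.sum_prod_type]
  simp only [hHbar, hη]
  have goalA := congrFun (keyA k) i
  simp only [Pi.smul_apply, Pi.add_apply, smul_eq_mul] at goalA
  have hHkw : H k *ᵥ (∑ l, (a l / (m : ℝ)) • vk l) = (Real.sqrt m)⁻¹ • (H k *ᵥ v) := by
    rw [keyB, Matrix.mulVec_smul]
  have hHkw' : ∑ l, (a l / (m : ℝ)) * (∑ j, H k i j * vk l j)
      = (Real.sqrt m)⁻¹ * (∑ j, H k i j * v j) := by
    have h := congrFun hHkw i
    simp only [Matrix.mulVec, dotProduct, Finset.sum_apply, Pi.smul_apply,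
      smul_eq_mul] at h
    rw [← h]
    simp_rw [Finset.mul_sum]
    rw [Finset.sum_comm]
    apply Finset.sum_congr rfl; intro j _
    apply Finset.sum_congr rfl; intro l _
    ring
  calc ∑ l, ∑ j, (a k * a l / (m : ℝ) + lam * (if k = l then 1 else 0)) * H k i j * vk l j
      = ∑ l, ((a k * a l / (m : ℝ)) * (∑ j, H k i j * vk l j)
          + lam * (if k = l then 1 else 0) * (∑ j, H k i j * vk l j)) := by
        apply Finset.sum_congr rfl; intro l _
        rw [Finset.mul_sum, Finset.mul_sum, ← Finset.sum_add_distrib]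
        apply Finset.sum_congr rfl; intro j _
        ring
    _ = a k * (∑ l, (a l / (m : ℝ)) * (∑ j, H k i j * vk l j))
          + lam * (∑ j, H k i j * vk k j) := by
        rw [Finset.sum_add_distrib]
        congr 1
        · rw [Finset.mul_sum]
          apply Finset.sum_congr rfl; intro l _
          ring
        · simp [mul_ite, ite_mul, mul_assoc]
    _ = p * vk k i := by
        rw [hHkw', goalA]
        simp only [Matrix.mulVec, dotProduct, div_eq_mul_inv]
        ring
end

section
/- Let n, m ∈ ℕ, let H₁,…,H_m be symmetric positive-semidefinite n×n real matrices, let a₁,…,a_m ∈ ℝ, let λ ≥ 0, and let p ∈ ℝ be such that pI − λH_k is invertible for every k. Let H̄ be the (nm)×(nm) real block matrix, with blocks indexed by k,l ∈ {1,…,m}, whose (k,l) block is the n×n matrix (a_k a_l/m + λ δ_{kl}) H_k, where δ_{kl} is the Kronecker delta. Suppose u ∈ ℝⁿ satisfies Σ_{k=1}^m (a_k²/m) H_k (pI − λH_k)^{-1} u = u. Then the block vector η ∈ ℝ^{nm} whose k-th block is u_k := (a_k/√m) (pI − λH_k)^{-1} u satisfies H̄ᵀ η = p η, i.e. η is a left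 eigenvector of H̄ with eigenvalue p. -/
open scoped Matrix

/-- Supplement, Lemma 5 (left-eigenvector part): if u satisfies
Σₖ (aₖ²/m)Hₖ(pI − λHₖ)⁻¹ u = u, then the block vector with blocks
uₖ = (aₖ/√m)(pI − λHₖ)⁻¹ u is a left eigenvector (i.e. an eigenvector of H̄ᵀ) of the
block matrix H̄ (whose (k,l) block is (aₖaₗ/m + λδ_{kl})Hₖ) with eigenvalue p. -/
theorem stmt8 {n m : ℕ} (H : Fin m → Matrix (Fin n) (Fin n) ℝ)
    (hH : ∀ k, (H k).PosSemidef)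
    (a : Fin m → ℝ) (lam : ℝ) (hlam : 0 ≤ lam) (p : ℝ)
    (hinv : ∀ k, IsUnit (p • (1 : Matrix (Fin n) (Fin n) ℝ) - lam • H k))
    (Hbar : Matrix (Fin m × Fin n) (Fin m × Fin n) ℝ)
    (hHbar : ∀ k l i j, Hbar (k, i) (l, j) =
      (a k * a l / (m : ℝ) + lam * (if k = l then 1 else 0)) * H k i j)
    (u : Fin n → ℝ)
    (hu : ∑ k, (a k ^ 2 / (m : ℝ)) •
        ((H k * (p • (1 : Matrix (Fin n) (Fin n) ℝ) - lam • H k)⁻¹) *ᵥ u) = u)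
    (uk : Fin m → Fin n → ℝ)
    (huk : ∀ k, uk k = (a k / Real.sqrt m) •
        ((p • (1 : Matrix (Fin n) (Fin n) ℝ) - lam • H k)⁻¹ *ᵥ u))
    (η : Fin m × Fin n → ℝ) (hη : ∀ k i, η (k, i) = uk k i) :
    Hbarᵀ *ᵥ η = p • η := by
  set A : Fin m → Matrix (Fin n) (Fin n) ℝ :=
    fun k => p • (1 : Matrix (Fin n) (Fin n) ℝ) - lam • H k with hA
  have hAinv : ∀ l, A l * (A l)⁻¹ = 1 := fun l =>
    Matrix.mul_nonsing_inv _ ((Matrix.isUnit_iff_isUnit_det _).mp (hinv l))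
  have key : ∀ l, p • ((A l)⁻¹ *ᵥ u) = u + lam • ((H l * (A l)⁻¹) *ᵥ u) := by
    intro l
    have h0 : A l + lam • H l = p • (1 : Matrix (Fin n) (Fin n) ℝ) := by
      simp [hA]
    have h1 : (A l + lam • H l) *ᵥ ((A l)⁻¹ *ᵥ u) = p • ((A l)⁻¹ *ᵥ u) := by
      rw [h0, Matrix.smul_mulVec, Matrix.one_mulVec]
    rw [← h1, Matrix.add_mulVec, Matrix.mulVec_mulVec, hAinv, Matrix.one_mulVec,
        Matrix.smul_mulVec, Matrix.mulVec_mulVec]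
  funext ki
  obtain ⟨k, i⟩ := ki
  have hsym : ∀ l (j i : Fin n), H l j i = H l i j := by
    intro l j i
    simpa using (hH l).1.apply i j
  have hsumj : ∀ l, ∑ j, H l j i * η (l, j)
      = (a l / Real.sqrt m) * ((H l * (A l)⁻¹) *ᵥ u) i := by
    intro l
    have : ∀ j, H l j i * η (l, j)
        = (a l / Real.sqrt m) * (H l i j * ((A l)⁻¹ *ᵥ u) j) := by
      intro j
      rw [hη, huk, hsym]
      simp [Pi.smul_apply, smul_eq_mul]
      ring
    rw [Finset.sum_congr rfl (fun j _ => this j), ← Finset.mul_sum]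
    congr 1
    rw [← Matrix.mulVec_mulVec]
    simp [Matrix.mulVec, dotProduct]
  have hLHS : (Hbarᵀ *ᵥ η) (k, i)
      = ∑ l, (a l * a k / (m : ℝ) + lam * (if l = k then 1 else 0)) *
          ((a l / Real.sqrt m) * ((H l * (A l)⁻¹) *ᵥ u) i) := by
    rw [Matrix.mulVec]
    simp only [dotProduct, Matrix.transpose_apply]
    rw [Fintype.sum_prod_type]
    refine Finset.sum_congr rfl (fun l _ => ?_)
    rw [← hsumj l, Finset.mul_sum]
    refine Finset.sum_congr rfl (fun j _ => ?_)
    rw [hHbar]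
    ring
  rw [hLHS]
  have hu' := congrFun hu i
  simp only [Finset.sum_apply, Pi.smul_apply, smul_eq_mul] at hu'
  have hu'' : ∑ x, a x ^ 2 / (m : ℝ) * ((H x * (A x)⁻¹) *ᵥ u) i = u i := hu'
  have key' : p * ((A k)⁻¹ *ᵥ u) i = u i + lam * ((H k * (A k)⁻¹) *ᵥ u) i := by
    have := congrFun (key k) i
    simpa using this
  have hRHS : (p • η) (k, i) = (a k / Real.sqrt m) * (p * ((A k)⁻¹ *ᵥ u) i) := by
    rw [Pi.smul_apply, hη, huk]
    simp [smul_eq_mul]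
    ring
  rw [hRHS, key']
  calc ∑ l, (a l * a k / (m : ℝ) + lam * (if l = k then 1 else 0)) *
          ((a l / Real.sqrt m) * ((H l * (A l)⁻¹) *ᵥ u) i)
      = ∑ l, ((a k / Real.sqrt m) * (a l ^ 2 / (m : ℝ) * ((H l * (A l)⁻¹) *ᵥ u) i)
          + (if l = k then (a k / Real.sqrt m) * (lam * ((H k * (A k)⁻¹) *ᵥ u) i) else 0)) := by
        refine Finset.sum_congr rfl (fun l _ => ?_)
        by_cases h : l = k
        · subst h; simp; ring
        · simp [h]; ring
    _ = (a k / Real.sqrt m) * (u i + lam * ((H k * (A k)⁻¹) *ᵥ u) i) := by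
        rw [Finset.sum_add_distrib, ← Finset.mul_sum, hu'']
        simp [mul_add]
end
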